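/- arXiv:0809.0386 — 3 statements merged into one kernel-verified Lean document; each statement's English description precedes it below -/
import Mathlib

section
/- Let n ≥ 1, k ∈ {1,…,n}, and fix a set I ⊆ {1,…,n} with |I| = k. Let E ⊆ ℝ × ℝⁿ be a discrete set which is homogeneous with respect to positive integers (m·(x,z) ∈ E for every (x,z) ∈ E and every positive integer m), and such that every (x,z) ∈ E satisfies zᵢ ≥ 1 for i ∈ I and zᵢ = 0 for i ∉ I. Let v > n and c_k = (v−n)/(kv+n). Then the following are equivalent: (1) for every N > 0 there exists (x,z) ∈ E with ‖z‖ ≥ N and |x| ≤ (∏_{i∈I} zᵢ)^{−v/n}; (2) for every T > 0 there exist t = (t₁,…,t_n) with tᵢ ≥ 0 and ∑ᵢtᵢ ≥ T, and a nonzero (x,z) ∈ E, such that max(e^{∑ᵢtᵢ}·|x|, max_{1≤i≤n} e^{−tᵢ}|zᵢ|) ≤ e^{−c_k·∑ᵢtᵢ}. -/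
open Filter MeasureTheory Metric Set BigOperators

set_option maxHeartbeats 1000000 in
theorem stmt7 (n : ℕ) (hn : 1 ≤ n) (k : ℕ) (hk1 : 1 ≤ k) (hkn : k ≤ n)
    (I : Finset (Fin n)) (hI : I.card = k)
    (E : Set (ℝ × (Fin n → ℝ)))
    (hdisc : ∀ p : ℝ × (Fin n → ℝ), ¬ AccPt p (Filter.principal E))
    (hhom : ∀ xz ∈ E, ∀ m : ℕ, 0 < m → (m : ℝ) • xz ∈ E)
    (hz : ∀ xz ∈ E, (∀ i ∈ I, (1:ℝ) ≤ xz.2 i) ∧ ∀ i ∉ I, xz.2 i = 0)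
    (v : ℝ) (hv : (n : ℝ) < v) :
    (∀ N > (0:ℝ), ∃ xz ∈ E, N ≤ ‖xz.2‖ ∧
        |xz.1| ≤ (∏ i ∈ I, xz.2 i) ^ (-(v / (n : ℝ)))) ↔
    (∀ T > (0:ℝ), ∃ t : Fin n → ℝ, (∀ i, 0 ≤ t i) ∧ T ≤ ∑ i, t i ∧
        ∃ xz ∈ E, xz ≠ 0 ∧
          Real.exp (∑ i, t i) * |xz.1| ≤
            Real.exp (-((v - n) / (k * v + n)) * ∑ i, t i) ∧
          ∀ i, Real.exp (-(t i)) * |xz.2 i| ≤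
            Real.exp (-((v - n) / (k * v + n)) * ∑ i, t i)) := by
  have hn0 : (0:ℝ) < n := by exact_mod_cast hn
  have hk0 : (0:ℝ) < k := by exact_mod_cast hk1
  have hv0 : (0:ℝ) < v := hn0.trans hv
  have hden : (0:ℝ) < (k:ℝ) * v + n := by positivity
  set c : ℝ := (v - (n:ℝ)) / ((k:ℝ) * v + (n:ℝ)) with hc
  have hc0 : 0 < c := div_pos (by linarith) hden
  obtain ⟨j₀, hj₀⟩ : ∃ j, j ∈ I := Finset.card_pos.1 (by omega)
  constructor
  · -- (1) → (2)
    intro h1 T hT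
    set β : ℝ := ((n:ℝ)*(1+k))/((n:ℝ)+k*v) with hβ
    have hβ0 : 0 < β := by positivity
    obtain ⟨xz, hxzE, hxznorm, hxzx⟩ := h1 (Real.exp (T*β)) (Real.exp_pos _)
    obtain ⟨hz1, hz2⟩ := hz xz hxzE
    set P : ℝ := ∏ i ∈ I, xz.2 i with hP
    have hzpos : ∀ i ∈ I, 0 < xz.2 i := fun i hi => lt_of_lt_of_le one_pos (hz1 i hi)
    have hP1 : 1 ≤ P := by
      calc (1:ℝ) = ∏ _i ∈ I, (1:ℝ) := by simp
        _ ≤ P := Finset.prod_le_prod (fun i _ => zero_le_one) hz1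
    have hP0 : 0 < P := lt_of_lt_of_le one_pos hP1
    have hzP : ∀ i, ‖xz.2 i‖ ≤ P := by
      intro i
      rw [Real.norm_eq_abs]
      by_cases hi : i ∈ I
      · rw [abs_of_nonneg (le_trans zero_le_one (hz1 i hi))]
        show xz.2 i ≤ ∏ j ∈ I, xz.2 j
        rw [← Finset.mul_prod_erase I _ hi]
        have h1' : (1:ℝ) ≤ ∏ j ∈ I.erase i, xz.2 j := by
          calc (1:ℝ) = ∏ _j ∈ I.erase i, (1:ℝ) := by simp
            _ ≤ _ := Finset.prod_le_prod (fun j _ => zero_le_one)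
                (fun j hj => hz1 j (Finset.mem_of_mem_erase hj))
        exact le_mul_of_one_le_right (le_trans zero_le_one (hz1 i hi)) h1'
      · rw [hz2 i hi, abs_zero]; exact hP0.le
    have hNP : Real.exp (T*β) ≤ P :=
      le_trans hxznorm ((pi_norm_le_iff_of_nonneg hP0.le).2 hzP)
    set L := Real.log P with hL
    have hLTβ : T*β ≤ L := by
      calc T*β = Real.log (Real.exp (T*β)) := (Real.log_exp _).symm
        _ ≤ L := Real.log_le_log (Real.exp_pos _) hNP
    have hL0 : 0 ≤ L := Real.log_nonneg hP1
    set a : ℝ := (v-n)*L/((n:ℝ)*(1+k)) with ha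
    have ha0 : 0 ≤ a := div_nonneg (mul_nonneg (by linarith) hL0) (by positivity)
    refine ⟨fun i => if i ∈ I then Real.log (xz.2 i) + a else 0, ?_, ?_, xz, hxzE, ?_, ?_, ?_⟩
    case _ =>
      intro i
      by_cases hi : i ∈ I
      · simp only [if_pos hi]
        exact add_nonneg (Real.log_nonneg (hz1 i hi)) ha0
      · simp [if_neg hi]
    all_goals
      have hsum : ∑ i, (if i ∈ I then Real.log (xz.2 i) + a else 0) = L + k*a := by
        rw [Finset.sum_ite_mem, Finset.univ_inter, Finset.sum_add_distrib,
          Finset.sum_const, hI, hL, hP,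
          Real.log_prod (fun i hi => (hzpos i hi).ne'), nsmul_eq_mul]
    case _ =>
      rw [hsum]
      have h2 : T * ((n:ℝ)*(1+k)) ≤ L * ((n:ℝ)+k*v) := by
        have := mul_le_mul_of_nonneg_right hLTβ (by positivity : (0:ℝ) ≤ (n:ℝ)+k*v)
        calc T*((n:ℝ)*(1+k)) = T*β*((n:ℝ)+k*v) := by
              rw [hβ]; field_simp
          _ ≤ L * ((n:ℝ)+k*v) := this
      have heq : L + (k:ℝ)*a = L * ((n:ℝ)+k*v) / ((n:ℝ)*(1+k)) := by
        rw [ha]; field_simp; ring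
      rw [heq, le_div_iff₀ (by positivity)]
      linarith
    case _ =>
      intro h
      have h1' := hz1 j₀ hj₀
      rw [h] at h1'
      simp at h1'
      linarith
    case _ =>
      rw [hsum]
      have hxP : |xz.1| ≤ Real.exp (L * (-(v/(n:ℝ)))) := by
        rw [← Real.rpow_def_of_pos hP0]
        exact hxzx
      calc Real.exp (L+k*a) * |xz.1|
          ≤ Real.exp (L+k*a) * Real.exp (L * (-(v/(n:ℝ)))) :=
            mul_le_mul_of_nonneg_left hxP (Real.exp_pos _).le
        _ = Real.exp (L + k*a + L*(-(v/(n:ℝ)))) := (Real.exp_add _ _).symm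
        _ = Real.exp (-c * (L+k*a)) := by
            congr 1
            rw [hc, ha]
            field_simp
            ring
    case _ =>
      intro i
      rw [hsum]
      by_cases hi : i ∈ I
      · simp only [if_pos hi]
        rw [abs_of_pos (hzpos i hi)]
        have hval : Real.exp (-(Real.log (xz.2 i) + a)) * xz.2 i = Real.exp (-a) := by
          rw [neg_add, Real.exp_add, Real.exp_neg (Real.log _), Real.exp_log (hzpos i hi)]
          rw [mul_comm, ← mul_assoc, mul_inv_cancel₀ (hzpos i hi).ne', one_mul]
        rw [hval]
        apply le_of_eq
        congr 1
        rw [hc, ha]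
        field_simp
        ring
      · simp only [if_neg hi]
        rw [hz2 i hi, abs_zero, mul_zero]
        exact (Real.exp_pos _).le
  · -- (2) → (1)
    intro h2 N hN
    by_cases hx0 : ∃ p ∈ E, p.1 = 0
    · obtain ⟨p, hpE, hp1⟩ := hx0
      obtain ⟨hpz1, hpz2⟩ := hz p hpE
      set m : ℕ := ⌈N⌉₊ + 1 with hm
      have hm0 : 0 < m := Nat.succ_pos _
      have hm0' : (0:ℝ) < m := by exact_mod_cast hm0
      have hmN : N ≤ (m:ℝ) := le_trans (Nat.le_ceil N) (by exact_mod_cast Nat.le_succ _)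
      refine ⟨(m:ℝ) • p, hhom p hpE m hm0, ?_, ?_⟩
      · show N ≤ ‖(m:ℝ) • p.2‖
        have h1 : (1:ℝ) ≤ ‖p.2‖ :=
          le_trans (hpz1 j₀ hj₀) (le_trans (le_abs_self _) (norm_le_pi_norm p.2 j₀))
        rw [norm_smul, Real.norm_eq_abs, abs_of_nonneg (Nat.cast_nonneg m)]
        nlinarith
      · have hfst : ((m:ℝ) • p).1 = 0 := by
          show (m:ℝ) • p.1 = 0
          rw [hp1, smul_zero]
        rw [hfst, abs_zero]
        apply le_of_lt
        apply Real.rpow_pos_of_pos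
        apply Finset.prod_pos
        intro i hi
        show (0:ℝ) < (m:ℝ) * p.2 i
        nlinarith [hpz1 i hi]
    · push_neg at hx0
      set K := (Metric.closedBall (0:ℝ) 1) ×ˢ (Metric.closedBall (0:Fin n → ℝ) N) with hK
      have hKc : IsCompact K := (isCompact_closedBall _ _).prod (isCompact_closedBall _ _)
      have hF : (E ∩ K).Finite := by
        by_contra h
        obtain ⟨x, -, hx⟩ := Set.Infinite.exists_accPt_of_subset_isCompact h hKc inter_subset_right
        exact hdisc x (hx.mono (principal_mono.2 inter_subset_left))
      obtain ⟨δ, hδ0, hδ⟩ : ∃ δ > (0:ℝ), ∀ p ∈ E ∩ K, δ ≤ |p.1| := by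
        set s := hF.toFinset.image fun p => |p.1| with hs'
        by_cases hs : s.Nonempty
        · refine ⟨s.min' hs, ?_, ?_⟩
          · obtain ⟨p, hp, hpeq⟩ := Finset.mem_image.1 (s.min'_mem hs)
            rw [← hpeq]
            exact abs_pos.2 (hx0 p (hF.mem_toFinset.1 hp).1)
          · intro p hp
            exact Finset.min'_le _ _ (Finset.mem_image_of_mem _ (hF.mem_toFinset.2 hp))
        · exact ⟨1, one_pos, fun p hp =>
            absurd ⟨_, Finset.mem_image_of_mem _ (hF.mem_toFinset.2 hp)⟩ hs⟩
      set T := max 1 ((1 - Real.log δ)/(1+c)) with hT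
      have hT0 : (0:ℝ) < T := lt_of_lt_of_le one_pos (le_max_left _ _)
      obtain ⟨t, ht0, hTS, xz, hxzE, hxzne, hxx, hxzi⟩ := h2 T hT0
      set S := ∑ i, t i with hS
      have hS0 : 0 < S := lt_of_lt_of_le hT0 hTS
      obtain ⟨hz1, hz2⟩ := hz xz hxzE
      have h1c : (0:ℝ) < 1 + c := by linarith
      have hxe : |xz.1| ≤ Real.exp (-(1+c)*S) := by
        have h' : Real.exp (-(1+c)*S) = Real.exp (-c*S) / Real.exp S := by
          rw [← Real.exp_sub]; ring_nf
        rw [h', le_div_iff₀ (Real.exp_pos _), mul_comm]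
        exact hxx
      have hexpT : Real.exp (-(1+c)*S) ≤ Real.exp (-(1+c)*T) :=
        Real.exp_le_exp.2 (by nlinarith)
      have hδT : Real.exp (-(1+c)*T) < δ := by
        rw [← Real.exp_log hδ0]
        apply Real.exp_lt_exp.2
        have hTge : (1 - Real.log δ)/(1+c) ≤ T := le_max_right _ _
        rw [div_le_iff₀ h1c] at hTge
        nlinarith
      have hxlt : |xz.1| < δ := lt_of_le_of_lt (le_trans hxe hexpT) hδT
      have hx1 : |xz.1| ≤ 1 := le_trans hxe (Real.exp_le_one_iff.2 (by nlinarith))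
      have hnotK : xz ∉ K := fun hK' => absurd (hδ xz ⟨hxzE, hK'⟩) (not_le.2 hxlt)
      have hN2 : N ≤ ‖xz.2‖ := by
        by_contra hcon
        push_neg at hcon
        exact hnotK ⟨by simpa [Real.norm_eq_abs] using hx1,
          by simpa using hcon.le⟩
      refine ⟨xz, hxzE, hN2, ?_⟩
      set P := ∏ i ∈ I, xz.2 i with hP
      have hzpos : ∀ i ∈ I, 0 < xz.2 i := fun i hi => lt_of_lt_of_le one_pos (hz1 i hi)
      have hP0 : 0 < P := Finset.prod_pos hzpos
      have hlogz : ∀ i ∈ I, Real.log (xz.2 i) ≤ t i - c*S := by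
        intro i hi
        have h := hxzi i
        rw [abs_of_pos (hzpos i hi)] at h
        have hle : xz.2 i ≤ Real.exp (t i - c*S) := by
          rw [show t i - c*S = -c*S - (-(t i)) by ring, Real.exp_sub,
            le_div_iff₀ (Real.exp_pos _), mul_comm]
          exact h
        calc Real.log (xz.2 i) ≤ Real.log (Real.exp (t i - c*S)) :=
              Real.log_le_log (hzpos i hi) hle
          _ = t i - c*S := Real.log_exp _
      have hlogP : Real.log P ≤ (1 - k*c) * S := by
        rw [hP, Real.log_prod (fun i hi => (hzpos i hi).ne')]
        have h1 : ∑ i ∈ I, Real.log (xz.2 i) ≤ ∑ i ∈ I, (t i - c*S) :=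
          Finset.sum_le_sum hlogz
        have h2' : ∑ i ∈ I, (t i - c*S) = (∑ i ∈ I, t i) - k*(c*S) := by
          rw [Finset.sum_sub_distrib, Finset.sum_const, hI, nsmul_eq_mul]
        have h3 : ∑ i ∈ I, t i ≤ S := by
          rw [hS]
          exact Finset.sum_le_sum_of_subset_of_nonneg (Finset.subset_univ I)
            (fun i _ _ => ht0 i)
        nlinarith
      rw [Real.rpow_def_of_pos hP0]
      refine le_trans hxe (Real.exp_le_exp.2 ?_)
      have hcoef : (v/(n:ℝ)) * (1 - k*c) = 1 + c := by
        rw [hc]; field_simp; ring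
      have hvn0 : (0:ℝ) < v/(n:ℝ) := by positivity
      have hkey : (v/(n:ℝ)) * Real.log P ≤ (1+c)*S := by
        calc (v/(n:ℝ)) * Real.log P ≤ (v/(n:ℝ)) * ((1 - k*c)*S) :=
              mul_le_mul_of_nonneg_left hlogP hvn0.le
          _ = ((v/(n:ℝ)) * (1 - k*c))*S := by ring
          _ = (1+c)*S := by rw [hcoef]
      linarith
end

section
/- Let n ≥ 1, y ∈ ℝⁿ, v > n, k ∈ {1,…,n}, and c_k = (v−n)/(kv+n). Then the following are equivalent: (1) for every N > 0 there exist q ∈ ℤⁿ with exactly k nonzero entries and ‖q‖ ≥ N, and p ∈ ℤ, such that |q·y + p| ≤ Π×(q)^{−v/n}; (2) for every T > 0 there exists t = (t₁,…,t_n) with tᵢ ≥ 0 and t := ∑ᵢtᵢ ≥ T such that g_t u_y(ℤ^{n+1}_k) contains a nonzero vector of supremum norm ≤ e^{−c_k·t}. -/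
open Filter MeasureTheory Metric Set BigOperators

/-- Π×(q) = ∏_{i : qᵢ ≠ 0} |qᵢ| (empty product = 1). -/
noncomputable def prodTimes {n : ℕ} (q : Fin n → ℤ) : ℝ :=
  ∏ i, if q i = 0 then 1 else |(q i : ℝ)|

lemma one_le_facts {n : ℕ} (q : Fin n → ℤ) (i : Fin n) :
    (1:ℝ) ≤ if q i = 0 then 1 else |(q i : ℝ)| := by
  split
  · exact le_refl _
  · rename_i h
    rw [← Int.cast_abs]
    exact_mod_cast Int.one_le_abs h

lemma one_le_prod_gen {n : ℕ} (s : Finset (Fin n)) (f : Fin n → ℝ)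
    (h : ∀ i ∈ s, 1 ≤ f i) : (1:ℝ) ≤ ∏ i ∈ s, f i := by
  calc (1:ℝ) = ∏ _i ∈ s, 1 := (Finset.prod_const_one).symm
  _ ≤ ∏ i ∈ s, f i := Finset.prod_le_prod (fun _ _ => zero_le_one) h

lemma one_le_prodTimes {n : ℕ} (q : Fin n → ℤ) : (1:ℝ) ≤ prodTimes q :=
  one_le_prod_gen _ _ fun i _ => one_le_facts q i

lemma abs_le_prodTimes {n : ℕ} (q : Fin n → ℤ) (i : Fin n) :
    |(q i : ℝ)| ≤ prodTimes q := by
  by_cases h : q i = 0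
  · simp only [h, Int.cast_zero, abs_zero]
    exact le_trans zero_le_one (one_le_prodTimes q)
  · have heq := Finset.mul_prod_erase Finset.univ
      (fun j => if q j = 0 then 1 else |(q j : ℝ)|) (Finset.mem_univ i)
    have h2 : (1:ℝ) ≤ ∏ j ∈ Finset.univ.erase i, (if q j = 0 then 1 else |(q j : ℝ)|) :=
      one_le_prod_gen _ _ fun j _ => one_le_facts q j
    have h3 : |(q i : ℝ)| * 1 ≤ |(q i : ℝ)| *
        ∏ j ∈ Finset.univ.erase i, (if q j = 0 then 1 else |(q j : ℝ)|) :=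
      mul_le_mul_of_nonneg_left h2 (abs_nonneg _)
    unfold prodTimes
    rw [← heq]
    simp only [if_neg h]
    simpa using h3

theorem stmt8 (n : ℕ) (hn : 1 ≤ n) (y : Fin n → ℝ) (v : ℝ) (hv : (n : ℝ) < v)
    (k : ℕ) (hk1 : 1 ≤ k) (hkn : k ≤ n) :
    (∀ N > (0:ℝ), ∃ q : Fin n → ℤ,
        (Finset.univ.filter fun i => q i ≠ 0).card = k ∧
        N ≤ ‖(fun i => (q i : ℝ))‖ ∧
        ∃ p : ℤ, |(∑ i, (q i : ℝ) * y i) + (p : ℝ)| ≤ (prodTimes q) ^ (-(v / (n : ℝ)))) ↔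
    (∀ T > (0:ℝ), ∃ t : Fin n → ℝ, (∀ i, 0 ≤ t i) ∧ T ≤ ∑ i, t i ∧
        ∃ (p : ℤ) (q : Fin n → ℤ),
          (Finset.univ.filter fun i => q i ≠ 0).card = k ∧
          ¬(p = 0 ∧ q = 0) ∧
          Real.exp (∑ i, t i) * |(p : ℝ) + ∑ i, (q i : ℝ) * y i| ≤
            Real.exp (-((v - n) / (k * v + n)) * ∑ i, t i) ∧
          ∀ i, Real.exp (-(t i)) * |(q i : ℝ)| ≤
            Real.exp (-((v - n) / (k * v + n)) * ∑ i, t i)) := by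
  have hn0 : (0:ℝ) < n := by exact_mod_cast hn
  have hk0 : (0:ℝ) < k := by exact_mod_cast hk1
  have hd : (0:ℝ) < (k:ℝ) * v + n := by nlinarith
  set c : ℝ := (v - (n:ℝ)) / ((k:ℝ) * v + (n:ℝ)) with hcdef
  have hc0 : 0 < c := div_pos (by linarith) hd
  have h1kc : 0 < 1 - (k:ℝ) * c := by
    have h : 1 - (k:ℝ) * c = ((n:ℝ) * ((k:ℝ)+1)) / ((k:ℝ) * v + n) := by
      rw [hcdef]; field_simp; ring
    rw [h]; positivity
  have h1c : (1 + c) = (v / (n:ℝ)) * (1 - (k:ℝ) * c) := by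
    have hd' : v * (k:ℝ) + n ≠ 0 := by nlinarith
    rw [hcdef]; field_simp; ring
  have h1c0 : (0:ℝ) < 1 + c := by linarith
  have hvn0 : (0:ℝ) < v / n := div_pos (lt_trans hn0 hv) hn0
  constructor
  · intro H T hT
    obtain ⟨q, hcard, hNq, p, hp⟩ := H (Real.exp ((1 - (k:ℝ)*c)*T)) (Real.exp_pos _)
    have hP1 : (1:ℝ) ≤ prodTimes q := one_le_prodTimes q
    have hP0 : (0:ℝ) < prodTimes q := lt_of_lt_of_le one_pos hP1
    set L := Real.log (prodTimes q) with hLdef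
    have hL0 : 0 ≤ L := Real.log_nonneg hP1
    have hnormle : ‖(fun i => (q i:ℝ))‖ ≤ prodTimes q := by
      apply (pi_norm_le_iff_of_nonneg hP0.le).mpr
      intro i; rw [Real.norm_eq_abs]; exact abs_le_prodTimes q i
    have hLT : (1 - (k:ℝ)*c)*T ≤ L := by
      rw [hLdef, ← Real.exp_le_exp, Real.exp_log hP0]
      exact le_trans hNq hnormle
    set t := L / (1 - (k:ℝ)*c) with htdef
    have htL : (1 - (k:ℝ)*c)*t = L := by
      rw [htdef]; field_simp
    have ht0 : 0 ≤ t := div_nonneg hL0 h1kc.le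
    have hTt : T ≤ t := by
      rw [htdef, le_div_iff₀ h1kc]; linarith
    have hqabs1 : ∀ i, q i ≠ 0 → (1:ℝ) ≤ |(q i:ℝ)| := by
      intro i hi; rw [← Int.cast_abs]; exact_mod_cast Int.one_le_abs hi
    have hsum : ∑ i, (if q i = 0 then (0:ℝ) else Real.log |(q i:ℝ)| + c*t) = t := by
      have h1 : ∑ i, (if q i = 0 then (0:ℝ) else Real.log |(q i:ℝ)| + c*t)
          = ∑ i ∈ Finset.univ.filter (fun i => q i ≠ 0), (Real.log |(q i:ℝ)| + c*t) := by
        rw [Finset.sum_filter]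
        apply Finset.sum_congr rfl
        intro i _
        by_cases h : q i = 0 <;> simp [h]
      have h2 : L = ∑ i ∈ Finset.univ.filter (fun i => q i ≠ 0), Real.log |(q i:ℝ)| := by
        rw [hLdef]
        unfold prodTimes
        rw [Real.log_prod]
        · rw [Finset.sum_filter]
          apply Finset.sum_congr rfl
          intro i _
          by_cases h : q i = 0 <;> simp [h]
        · intro i _
          split
          · exact one_ne_zero
          · rename_i h
            have := hqabs1 i h; positivity
      rw [h1, Finset.sum_add_distrib, Finset.sum_const, hcard, ← h2, nsmul_eq_mul]
      linarith [htL]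
    refine ⟨fun i => if q i = 0 then (0:ℝ) else Real.log |(q i:ℝ)| + c*t, ?_, ?_, p, q, hcard, ?_, ?_, ?_⟩
    · intro i
      by_cases h : q i = 0
      · simp [h]
      · simp only [if_neg h]
        exact add_nonneg (Real.log_nonneg (hqabs1 i h)) (mul_nonneg hc0.le ht0)
    · rw [hsum]; exact hTt
    · rintro ⟨-, hq0⟩
      have hpos : 0 < (Finset.univ.filter fun i => q i ≠ 0).card := by rw [hcard]; omega
      obtain ⟨i, hi⟩ := Finset.card_pos.mp hpos
      exact (Finset.mem_filter.mp hi).2 (by rw [hq0]; rfl)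
    · rw [hsum]
      have hrpow : (prodTimes q) ^ (-(v/(n:ℝ))) = Real.exp (-((v/n)*L)) := by
        rw [Real.rpow_def_of_pos hP0, ← hLdef]; ring_nf
      have hvnL : (v/n)*L = (1+c)*t := by rw [← htL, h1c]; ring
      have habs : |(p:ℝ) + ∑ i, (q i:ℝ)*y i| ≤ Real.exp (-((1+c)*t)) := by
        rw [← hvnL, ← hrpow, add_comm]
        exact hp
      calc Real.exp t * |(p:ℝ) + ∑ i, (q i:ℝ)*y i|
          ≤ Real.exp t * Real.exp (-((1+c)*t)) :=
            mul_le_mul_of_nonneg_left habs (Real.exp_pos _).le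
        _ = Real.exp (-c*t) := by rw [← Real.exp_add]; ring_nf
    · intro i
      rw [hsum]
      by_cases h : q i = 0
      · simp [h]
        positivity
      · simp only [if_neg h]
        have hq0' : (0:ℝ) < |(q i:ℝ)| := lt_of_lt_of_le one_pos (hqabs1 i h)
        have : Real.exp (-(Real.log |(q i:ℝ)| + c*t)) * |(q i:ℝ)| = Real.exp (-c*t) := by
          rw [neg_add, Real.exp_add, Real.exp_neg, Real.exp_log hq0']
          field_simp
        rw [this]
  · intro H N hN
    set M : ℤ := ⌈N⌉ with hMdef
    have hM1 : (1:ℤ) ≤ M := by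
      have : (0:ℤ) < M := Int.ceil_pos.mpr hN
      omega
    have hNM : N ≤ (M:ℝ) := Int.le_ceil N
    have hM0R : (0:ℝ) ≤ (M:ℝ) := by exact_mod_cast (by omega : (0:ℤ) ≤ M)
    set B : ℤ := ⌈1 + (M:ℝ) * ∑ i, |y i|⌉ with hBdef
    set S : Finset (ℤ × (Fin n → ℤ)) :=
      (Finset.Icc (-B) B) ×ˢ (Fintype.piFinset fun _ => Finset.Icc (-M) M) with hSdef
    set f : ℤ × (Fin n → ℤ) → ℝ := fun pq => |(pq.1:ℝ) + ∑ i, (pq.2 i:ℝ) * y i| with hfdef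
    set P := (S.image f).filter (fun x => 0 < x) with hPdef
    have hδ0 : ∀ hne : P.Nonempty, 0 < P.min' hne := by
      intro hne
      have h := P.min'_mem hne
      have h2 : P.min' hne ∈ (S.image f).filter (fun x => 0 < x) := h
      exact (Finset.mem_filter.mp h2).2
    set δ := if hne : P.Nonempty then P.min' hne else 1 with hδdef
    have hδpos : 0 < δ := by
      rw [hδdef]; split
      · rename_i hne; exact hδ0 hne
      · exact one_pos
    have hδle : ∀ pq ∈ S, 0 < f pq → δ ≤ f pq := by
      intro pq hpq hpos
      have hmem : f pq ∈ P := Finset.mem_filter.mpr ⟨Finset.mem_image_of_mem f hpq, hpos⟩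
      rw [hδdef, dif_pos ⟨_, hmem⟩]
      exact Finset.min'_le _ _ hmem
    set T := max 1 (-Real.log δ / (1+c) + 1) with hTdef
    have hT1 : (1:ℝ) ≤ T := le_max_left _ _
    have hT0 : 0 < T := lt_of_lt_of_le one_pos hT1
    have hexpδ : Real.exp (-(1+c)*T) < δ := by
      have h1 : -Real.log δ/(1+c) + 1 ≤ T := le_max_right _ _
      have h2 : (1+c)*(-Real.log δ/(1+c) + 1) ≤ (1+c)*T :=
        mul_le_mul_of_nonneg_left h1 h1c0.le
      have hh : (1+c)*(-Real.log δ/(1+c) + 1) = -Real.log δ + (1+c) := by field_simp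
      rw [hh] at h2
      calc Real.exp (-(1+c)*T) ≤ Real.exp (Real.log δ - (1+c)) :=
            Real.exp_le_exp.mpr (by linarith)
        _ < Real.exp (Real.log δ) := Real.exp_lt_exp.mpr (by linarith)
        _ = δ := Real.exp_log hδpos
    obtain ⟨t, ht0, htT, p, q, hcard, hpq0, hmain, hcoord⟩ := H T hT0
    set τ := ∑ i, t i with hτdef
    have hτT : T ≤ τ := htT
    have hτ0 : 0 < τ := lt_of_lt_of_le hT0 hτT
    have habs : |(p:ℝ) + ∑ i, (q i:ℝ)*y i| ≤ Real.exp (-(1+c)*τ) := by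
      have h2 : |(p:ℝ) + ∑ i, (q i:ℝ)*y i| ≤ Real.exp (-c*τ)/Real.exp τ := by
        rw [le_div_iff₀ (Real.exp_pos _), mul_comm]
        exact hmain
      rw [← Real.exp_sub] at h2
      calc |(p:ℝ) + ∑ i, (q i:ℝ)*y i| ≤ Real.exp (-c*τ - τ) := h2
        _ = Real.exp (-(1+c)*τ) := by ring_nf
    have hqbound : ∀ i, |(q i:ℝ)| ≤ Real.exp (t i - c*τ) := by
      intro i
      calc |(q i:ℝ)| = Real.exp (t i) * (Real.exp (-(t i)) * |(q i:ℝ)|) := by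
            rw [← mul_assoc, ← Real.exp_add]; simp
        _ ≤ Real.exp (t i) * Real.exp (-c*τ) :=
            mul_le_mul_of_nonneg_left (hcoord i) (Real.exp_pos _).le
        _ = Real.exp (t i - c*τ) := by rw [← Real.exp_add]; ring_nf
    have hqne : ∃ i, q i ≠ 0 := by
      have hpos : 0 < (Finset.univ.filter fun i => q i ≠ 0).card := by rw [hcard]; omega
      obtain ⟨i, hi⟩ := Finset.card_pos.mp hpos
      exact ⟨i, (Finset.mem_filter.mp hi).2⟩
    by_cases hbig : N ≤ ‖(fun i => (q i:ℝ))‖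
    · refine ⟨q, hcard, hbig, p, ?_⟩
      have hP1 : (1:ℝ) ≤ prodTimes q := one_le_prodTimes q
      have hP0 : (0:ℝ) < prodTimes q := lt_of_lt_of_le one_pos hP1
      have hPle : prodTimes q ≤ Real.exp ((1 - (k:ℝ)*c)*τ) := by
        have step1 : prodTimes q ≤
            ∏ i, (if q i = 0 then Real.exp (t i) else Real.exp (t i - c*τ)) := by
          unfold prodTimes
          apply Finset.prod_le_prod
          · intro i _; split
            · exact zero_le_one
            · exact abs_nonneg _
          · intro i _
            by_cases h : q i = 0
            · simp only [if_pos h]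
              exact Real.one_le_exp (ht0 i)
            · simp only [if_neg h]
              exact hqbound i
        have step2 : ∏ i, (if q i = 0 then Real.exp (t i) else Real.exp (t i - c*τ))
            = Real.exp (τ - (k:ℝ)*(c*τ)) := by
          have hι : ∀ i, (if q i = 0 then Real.exp (t i) else Real.exp (t i - c*τ))
              = Real.exp (t i - (if q i = 0 then 0 else c*τ)) := by
            intro i; by_cases h : q i = 0 <;> simp [h]
          rw [Finset.prod_congr rfl (fun i _ => hι i), ← Real.exp_sum]
          congr 1
          rw [Finset.sum_sub_distrib]
          have : ∑ i, (if q i = 0 then (0:ℝ) else c*τ)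
              = ∑ i ∈ Finset.univ.filter (fun i => q i ≠ 0), c*τ := by
            rw [Finset.sum_filter]
            apply Finset.sum_congr rfl
            intro i _
            by_cases h : q i = 0 <;> simp [h]
          rw [this, Finset.sum_const, hcard, nsmul_eq_mul, ← hτdef]
        exact step1.trans (le_of_eq (by rw [step2]; ring_nf))
      have hlogP : Real.log (prodTimes q) ≤ (1 - (k:ℝ)*c)*τ :=
        (Real.log_le_iff_le_exp hP0).mpr hPle
      have hrle : Real.exp (-(1+c)*τ) ≤ (prodTimes q) ^ (-(v/(n:ℝ))) := by
        rw [Real.rpow_def_of_pos hP0]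
        apply Real.exp_le_exp.mpr
        have hmul : (v/(n:ℝ)) * Real.log (prodTimes q) ≤ (v/n) * ((1 - (k:ℝ)*c)*τ) :=
          mul_le_mul_of_nonneg_left hlogP hvn0.le
        have heq : (v/(n:ℝ)) * ((1 - (k:ℝ)*c)*τ) = (1+c)*τ := by rw [h1c]; ring
        nlinarith [hmul, heq]
      calc |(∑ i, (q i:ℝ)*y i) + (p:ℝ)| = |(p:ℝ) + ∑ i, (q i:ℝ)*y i| := by rw [add_comm]
        _ ≤ Real.exp (-(1+c)*τ) := habs
        _ ≤ (prodTimes q) ^ (-(v/(n:ℝ))) := hrle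
    · push_neg at hbig
      have hqabsR : ∀ i, |(q i:ℝ)| ≤ (M:ℝ) := by
        intro i
        have h1 : |(q i:ℝ)| ≤ ‖(fun j => (q j:ℝ))‖ := by
          have := norm_le_pi_norm (fun j => (q j:ℝ)) i
          rwa [Real.norm_eq_abs] at this
        linarith [lt_of_le_of_lt h1 hbig, hNM]
      have hqM : ∀ i, q i ∈ Finset.Icc (-M) M := by
        intro i
        have : |q i| ≤ M := by
          have := hqabsR i
          rw [← Int.cast_abs] at this
          exact_mod_cast this
        exact Finset.mem_Icc.mpr (abs_le.mp this)
      have hsum_bound : |∑ i, (q i:ℝ)*y i| ≤ (M:ℝ) * ∑ i, |y i| := by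
        calc |∑ i, (q i:ℝ)*y i| ≤ ∑ i, |(q i:ℝ)*y i| := Finset.abs_sum_le_sum_abs _ _
          _ ≤ ∑ i, (M:ℝ)*|y i| := by
              apply Finset.sum_le_sum
              intro i _
              rw [abs_mul]
              exact mul_le_mul_of_nonneg_right (hqabsR i) (abs_nonneg _)
          _ = (M:ℝ) * ∑ i, |y i| := by rw [Finset.mul_sum]
      have hexp1 : Real.exp (-(1+c)*τ) ≤ 1 := by
        have h0 : (0:ℝ) ≤ (1+c)*τ := mul_nonneg h1c0.le hτ0.le
        rw [show -(1+c)*τ = -((1+c)*τ) by ring, Real.exp_le_one_iff]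
        linarith
      have hpB : p ∈ Finset.Icc (-B) B := by
        have h1 : |(p:ℝ)| ≤ 1 + (M:ℝ) * ∑ i, |y i| := by
          have h2 : |(p:ℝ)| ≤ |(p:ℝ) + ∑ i, (q i:ℝ)*y i| + |∑ i, (q i:ℝ)*y i| := by
            simpa using abs_add_le ((p:ℝ) + ∑ i, (q i:ℝ)*y i) (-(∑ i, (q i:ℝ)*y i))
          linarith [habs.trans hexp1]
        have h3 : (1:ℝ) + (M:ℝ) * ∑ i, |y i| ≤ (B:ℝ) := Int.le_ceil _
        have h4 : |p| ≤ B := by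
          rw [← @Int.cast_le ℝ, Int.cast_abs]
          linarith
        exact Finset.mem_Icc.mpr (abs_le.mp h4)
      have hmemS : (p, q) ∈ S := by
        rw [hSdef, Finset.mem_product]
        exact ⟨hpB, Fintype.mem_piFinset.mpr hqM⟩
      have hfsmall : f (p, q) < δ := by
        have h5 : Real.exp (-(1+c)*τ) ≤ Real.exp (-(1+c)*T) := by
          apply Real.exp_le_exp.mpr
          linarith [mul_le_mul_of_nonneg_left hτT h1c0.le]
        calc f (p, q) ≤ Real.exp (-(1+c)*τ) := habs
          _ ≤ Real.exp (-(1+c)*T) := h5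
          _ < δ := hexpδ
      have hf0 : f (p, q) = 0 := by
        by_contra h
        have hpos : 0 < f (p, q) := lt_of_le_of_ne (abs_nonneg _) (Ne.symm h)
        exact absurd (hδle _ hmemS hpos) (not_le.mpr hfsmall)
      have hzero : (p:ℝ) + ∑ i, (q i:ℝ)*y i = 0 := abs_eq_zero.mp hf0
      obtain ⟨i0, hi0⟩ := hqne
      have hMne : M ≠ 0 := by omega
      clear_value M B S f P δ T τ
      refine ⟨fun i => M * q i, ?_, ?_, M * p, ?_⟩
      · rw [← hcard]
        congr 1
        apply Finset.filter_congr
        intro i _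
        simp [hMne]
      · have h1 : (1:ℝ) ≤ |(q i0:ℝ)| := by
          rw [← Int.cast_abs]; exact_mod_cast Int.one_le_abs hi0
        have h2 : N ≤ |((M * q i0 : ℤ):ℝ)| := by
          push_cast
          rw [abs_mul]
          calc N ≤ (M:ℝ) := hNM
            _ = |(M:ℝ)| * 1 := by rw [abs_of_nonneg hM0R, mul_one]
            _ ≤ |(M:ℝ)| * |(q i0:ℝ)| := mul_le_mul_of_nonneg_left h1 (abs_nonneg _)
        calc N ≤ |((M * q i0 : ℤ):ℝ)| := h2
          _ ≤ ‖(fun i => ((M * q i : ℤ):ℝ))‖ := by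
              have := norm_le_pi_norm (fun i => ((M * q i : ℤ):ℝ)) i0
              rwa [Real.norm_eq_abs] at this
      · have heq : (∑ i, ((M * q i : ℤ):ℝ) * y i) + ((M*p:ℤ):ℝ)
            = (M:ℝ) * ((p:ℝ) + ∑ i, (q i:ℝ)*y i) := by
          push_cast
          rw [mul_add, Finset.mul_sum, add_comm ((M:ℝ)*(p:ℝ))]
          congr 1
          exact Finset.sum_congr rfl fun i _ => by ring
        rw [heq, hzero, mul_zero, abs_zero]
        exact Real.rpow_nonneg
          (le_trans zero_le_one (one_le_prodTimes (fun i => M * q i))) _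
end

section
/- Let n ≥ 1 and y ∈ ℝⁿ. For 1 ≤ k ≤ n define γ_k(y) = sup{c > 0 : for every T > 0 there exists t = (t₁,…,t_n), tᵢ ≥ 0, with t := ∑ᵢtᵢ ≥ T such that g_t u_y(ℤ^{n+1}_k) contains a nonzero vector of supremum norm ≤ e^{−c·t}}, with sup ∅ = 0 and the supremum taken in [0,∞]. Then, in the extended reals and with the convention that (n + n·γ_k(y))/(1 − k·γ_k(y)) = +∞ whenever γ_k(y) ≥ 1/k, one has ω×(y) = max_{1≤k≤n} (n + n·γ_k(y))/(1 − k·γ_k(y)). -/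
open Filter MeasureTheory Metric Set BigOperators

namespace Stmt9Aux

def Sv (n : ℕ) (y : Fin n → ℝ) (v : ℝ) : Set (Fin n → ℤ) :=
  {q : Fin n → ℤ | ∃ p : ℤ, |(∑ i, (q i : ℝ) * y i) + (p : ℝ)| <
      (prodTimes q) ^ (-(v / (n : ℝ)))}

theorem one_le_abs_cast {m : ℤ} (h : m ≠ 0) : (1:ℝ) ≤ |(m : ℝ)| := by
  calc (1:ℝ) ≤ ((|m| : ℤ) : ℝ) := by exact_mod_cast Int.one_le_abs h
  _ = |(m : ℝ)| := by push_cast; ring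

theorem one_le_prod_real {α : Type*} {s : Finset α} {f : α → ℝ}
    (h : ∀ i ∈ s, 1 ≤ f i) : 1 ≤ ∏ i ∈ s, f i := by
  calc (1:ℝ) = ∏ _i ∈ s, 1 := Finset.prod_const_one.symm
  _ ≤ ∏ i ∈ s, f i := Finset.prod_le_prod (fun i _ => zero_le_one) h

theorem one_le_prodTimes {n : ℕ} (q : Fin n → ℤ) : 1 ≤ prodTimes q := by
  unfold prodTimes
  apply one_le_prod_real
  intro i _
  by_cases h : q i = 0
  · simp [h]
  · simp only [h, if_false]
    exact one_le_abs_cast h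

theorem prodTimes_pos {n : ℕ} (q : Fin n → ℤ) : 0 < prodTimes q :=
  lt_of_lt_of_le one_pos (one_le_prodTimes q)

theorem prodTimes_eq_filter {n : ℕ} (q : Fin n → ℤ) :
    prodTimes q = ∏ i ∈ Finset.univ.filter (fun i => q i ≠ 0), |(q i : ℝ)| := by
  rw [Finset.prod_filter]
  apply Finset.prod_congr rfl
  intro i _
  by_cases h : q i = 0 <;> simp [h]

theorem abs_le_prodTimes {n : ℕ} (q : Fin n → ℤ) {i : Fin n} (h : q i ≠ 0) :
    |(q i : ℝ)| ≤ prodTimes q := by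
  rw [prodTimes_eq_filter]
  have hi : i ∈ Finset.univ.filter (fun i => q i ≠ 0) := by simp [h]
  rw [← Finset.mul_prod_erase _ _ hi]
  have h1 : (1:ℝ) ≤ ∏ j ∈ (Finset.univ.filter (fun i => q i ≠ 0)).erase i, |(q j : ℝ)| := by
    apply one_le_prod_real
    intro j hj
    exact one_le_abs_cast (Finset.mem_filter.1 (Finset.mem_of_mem_erase hj)).2
  nlinarith [abs_nonneg ((q i : ℝ))]

theorem round_min (x : ℝ) (p : ℤ) : |x - round x| ≤ |x + p| := by
  rcases eq_or_ne (-p) (round x) with h | h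
  · have : x + p = x - ((-p : ℤ) : ℝ) := by push_cast; ring
    rw [this, h]
  · have h1 : (1:ℝ) ≤ |((-p : ℤ) : ℝ) - ((round x : ℤ) : ℝ)| := by
      have e : ((-p : ℤ) : ℝ) - ((round x : ℤ) : ℝ) = (((-p - round x : ℤ)) : ℝ) := by
        push_cast; ring
      rw [e]
      exact one_le_abs_cast (sub_ne_zero.2 h)
    have h2 : |x - round x| ≤ 1/2 := abs_sub_round x
    have h3 : |((-p:ℤ):ℝ) - ((round x : ℤ):ℝ)| ≤ |((-p:ℤ):ℝ) - x| + |x - ((round x:ℤ):ℝ)| :=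
      abs_sub_le _ _ _
    have h4 : |((-p:ℤ):ℝ) - x| = |x + p| := by
      rw [abs_sub_comm]
      congr 1
      push_cast; ring
    push_cast at h1 h3 h4 ⊢
    linarith [abs_nonneg (x + (p:ℝ))]
theorem exists_eps {n : ℕ} (y : Fin n → ℝ)
    (noexact : ∀ q : Fin n → ℤ, q ≠ 0 → ∀ p : ℤ, (∑ i, (q i : ℝ) * y i) + (p : ℝ) ≠ 0)
    (F : Finset (Fin n → ℤ)) :
    ∃ ε > (0:ℝ), ∀ q ∈ F, q ≠ 0 → ∀ p : ℤ, ε ≤ |(∑ i, (q i : ℝ) * y i) + (p : ℝ)| := by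
  classical
  set S : (Fin n → ℤ) → ℝ := fun q => ∑ i, (q i : ℝ) * y i with hS
  set d : (Fin n → ℤ) → ℝ := fun q => |S q - round (S q)| with hd
  set E : Finset ℝ := insert (1:ℝ) ((F.filter (fun q => q ≠ 0)).image d) with hE
  have hEne : E.Nonempty := ⟨1, Finset.mem_insert_self _ _⟩
  refine ⟨E.min' hEne, ?_, ?_⟩
  · rw [gt_iff_lt, Finset.lt_min'_iff]
    intro b hb
    rw [hE, Finset.mem_insert] at hb
    rcases hb with rfl | hb
    · norm_num
    · obtain ⟨q, hq, rfl⟩ := Finset.mem_image.1 hb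
      obtain ⟨-, hq0⟩ := Finset.mem_filter.1 hq
      have : S q - round (S q) ≠ 0 := by
        intro hz
        have : S q + (-(round (S q)) : ℤ) = 0 := by push_cast; linarith
        exact noexact q hq0 _ this
      exact abs_pos.2 this
  · intro q hq hq0 p
    have hmem : d q ∈ E := by
      rw [hE, Finset.mem_insert]
      right
      exact Finset.mem_image.2 ⟨q, Finset.mem_filter.2 ⟨hq, hq0⟩, rfl⟩
    exact le_trans (Finset.min'_le _ _ hmem) (round_min (S q) p)

theorem dirichlet {n : ℕ} (hn : 1 ≤ n) (y : Fin n → ℝ) (N : ℕ) (hN : 1 ≤ N) :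
    ∃ q : Fin n → ℤ, q ≠ 0 ∧ (∀ i, |q i| ≤ (N : ℤ)) ∧
      ∃ p : ℤ, |(∑ i, (q i : ℝ) * y i) + (p : ℝ)| < 1 / (N : ℝ) ^ n := by
  classical
  have hNpos : (0:ℝ) < (N:ℝ) ^ n := by positivity
  set S : (Fin n → Fin (N+1)) → ℝ := fun r => ∑ i, ((r i : ℕ) : ℝ) * y i with hSdef
  have hbox : ∀ r : Fin n → Fin (N+1),
      (⌊((N:ℝ)^n) * Int.fract (S r)⌋).toNat < N ^ n := by
    intro r
    have h0 : (0:ℝ) ≤ ((N:ℝ)^n) * Int.fract (S r) :=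
      mul_nonneg hNpos.le (Int.fract_nonneg _)
    have h1 : ((N:ℝ)^n) * Int.fract (S r) < (N:ℝ)^n := by
      have := Int.fract_lt_one (S r)
      nlinarith
    have hfl : ⌊((N:ℝ)^n) * Int.fract (S r)⌋ < ((N:ℤ)) ^ n := by
      apply Int.floor_lt.2
      push_cast
      exact h1
    have hfl0 : 0 ≤ ⌊((N:ℝ)^n) * Int.fract (S r)⌋ := Int.floor_nonneg.2 h0
    zify
    rw [Int.toNat_of_nonneg hfl0]
    push_cast
    exact hfl
  set box : (Fin n → Fin (N+1)) → Fin (N^n) :=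
    fun r => ⟨(⌊((N:ℝ)^n) * Int.fract (S r)⌋).toNat, hbox r⟩ with hboxdef
  have hcard : Fintype.card (Fin (N^n)) < Fintype.card (Fin n → Fin (N+1)) := by
    simp only [Fintype.card_fin, Fintype.card_fun]
    exact Nat.pow_lt_pow_left (Nat.lt_succ_self N) (by omega)
  obtain ⟨r, r', hne, heq⟩ := Fintype.exists_ne_map_eq_of_card_lt box hcard
  set q : Fin n → ℤ := fun i => (r i : ℤ) - (r' i : ℤ) with hq
  have hfloors : ⌊((N:ℝ)^n) * Int.fract (S r)⌋ = ⌊((N:ℝ)^n) * Int.fract (S r')⌋ := by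
    have hv : (⌊((N:ℝ)^n) * Int.fract (S r)⌋).toNat
        = (⌊((N:ℝ)^n) * Int.fract (S r')⌋).toNat := congrArg Fin.val heq
    have h0 : 0 ≤ ⌊((N:ℝ)^n) * Int.fract (S r)⌋ :=
      Int.floor_nonneg.2 (mul_nonneg hNpos.le (Int.fract_nonneg _))
    have h0' : 0 ≤ ⌊((N:ℝ)^n) * Int.fract (S r')⌋ :=
      Int.floor_nonneg.2 (mul_nonneg hNpos.le (Int.fract_nonneg _))
    omega
  have hdist : |((N:ℝ)^n) * Int.fract (S r) - ((N:ℝ)^n) * Int.fract (S r')| < 1 :=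
    Int.abs_sub_lt_one_of_floor_eq_floor hfloors
  have hfr : |Int.fract (S r) - Int.fract (S r')| < 1 / (N:ℝ)^n := by
    rw [lt_div_iff₀ hNpos]
    calc |Int.fract (S r) - Int.fract (S r')| * (N:ℝ)^n
        = |Int.fract (S r) - Int.fract (S r')| * |(N:ℝ)^n| := by rw [abs_of_pos hNpos]
    _ = |(Int.fract (S r) - Int.fract (S r')) * (N:ℝ)^n| := (abs_mul _ _).symm
    _ = |((N:ℝ)^n) * Int.fract (S r) - ((N:ℝ)^n) * Int.fract (S r')| := by
          congr 1; ring
    _ < 1 := hdist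
  refine ⟨q, ?_, ?_, ⟨⌊S r'⌋ - ⌊S r⌋, ?_⟩⟩
  · intro hq0
    apply hne
    funext i
    have h5 : q i = 0 := by rw [hq0]; rfl
    simp only [hq] at h5
    have : (r i : ℤ) = (r' i : ℤ) := by omega
    exact Fin.ext (by exact_mod_cast this)
  · intro i
    have h1 : (r i : ℕ) < N + 1 := (r i).isLt
    have h2 : (r' i : ℕ) < N + 1 := (r' i).isLt
    simp only [hq]
    rw [abs_le]
    constructor <;> omega
  · have hsum : ∑ i, (q i : ℝ) * y i = S r - S r' := by
      rw [hSdef]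
      rw [← Finset.sum_sub_distrib]
      apply Finset.sum_congr rfl
      intro i _
      rw [hq]
      push_cast
      ring
    have hfract : Int.fract (S r) - Int.fract (S r') =
        (S r - S r') + (((⌊S r'⌋ - ⌊S r⌋ : ℤ)) : ℝ) := by
      rw [Int.fract, Int.fract]
      push_cast
      ring
    rw [hsum, ← hfract]
    exact hfr
theorem Sv_infinite_of_exact {n : ℕ} (y : Fin n → ℝ) {q₀ : Fin n → ℤ} (hq0 : q₀ ≠ 0)
    {p₀ : ℤ} (hx : (∑ i, (q₀ i : ℝ) * y i) + (p₀ : ℝ) = 0) (v : ℝ) :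
    (Sv n y v).Infinite := by
  obtain ⟨i₀, hi₀⟩ : ∃ i, q₀ i ≠ 0 := by
    by_contra hc
    push_neg at hc
    exact hq0 (funext hc)
  refine Set.infinite_of_injective_forall_mem
    (f := fun m : ℕ => fun i => ((m : ℤ) + 1) * q₀ i) ?_ ?_
  · intro a b hab
    have h1 := congrFun hab i₀
    simp only at h1
    have : (a : ℤ) + 1 = (b : ℤ) + 1 := mul_right_cancel₀ hi₀ h1
    omega
  · intro m
    refine ⟨((m : ℤ) + 1) * p₀, ?_⟩
    have e : (∑ i, ((((m:ℤ)+1) * q₀ i : ℤ) : ℝ) * y i) + ((((m:ℤ)+1) * p₀ : ℤ) : ℝ)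
        = ((m:ℝ)+1) * ((∑ i, (q₀ i : ℝ) * y i) + (p₀ : ℝ)) := by
      have e1 : ∑ i, ((((m:ℤ)+1) * q₀ i : ℤ) : ℝ) * y i
          = ((m:ℝ)+1) * ∑ i, (q₀ i : ℝ) * y i := by
        rw [Finset.mul_sum]
        apply Finset.sum_congr rfl
        intro i _
        push_cast
        ring
      rw [e1]
      push_cast
      ring
    rw [e, hx, mul_zero, abs_zero]
    exact Real.rpow_pos_of_pos (prodTimes_pos _) _

theorem Sv_infinite_of_lt {n : ℕ} (hn : 1 ≤ n) (y : Fin n → ℝ)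
    (noexact : ∀ q : Fin n → ℤ, q ≠ 0 → ∀ p : ℤ, (∑ i, (q i : ℝ) * y i) + (p : ℝ) ≠ 0)
    {v : ℝ} (hv : v < n) : (Sv n y v).Infinite := by
  classical
  by_contra hfin
  rw [Set.not_infinite] at hfin
  obtain ⟨ε, hε, hbound⟩ := exists_eps y noexact hfin.toFinset
  obtain ⟨M, hM⟩ := exists_nat_gt (1/ε)
  set N := max M 2 with hN
  have hN2 : 2 ≤ N := le_max_right _ _
  have hNM : (1:ℝ)/N < ε := by
    have h1 : (1/ε : ℝ) < N := lt_of_lt_of_le hM (by exact_mod_cast le_max_left M 2)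
    have hNpos : (0:ℝ) < N := by positivity
    have h2 : 1 < (N:ℝ) * ε := by
      have := (div_lt_iff₀ hε).1 h1
      linarith
    rw [div_lt_iff₀ hNpos]
    linarith
  have hNn : (1:ℝ)/(N:ℝ)^n ≤ 1/(N:ℝ) := by
    have h1N : (1:ℝ) ≤ N := by
      have : (1:ℕ) ≤ N := by omega
      exact_mod_cast this
    apply div_le_div_of_nonneg_left one_pos.le (by positivity)
    calc (N:ℝ) = (N:ℝ)^1 := (pow_one _).symm
    _ ≤ (N:ℝ)^n := pow_le_pow_right₀ h1N hn
  obtain ⟨q, hq0, hqb, p, hp⟩ := dirichlet hn y N (by omega)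
  have hqSv : q ∈ Sv n y v := by
    refine ⟨p, lt_of_lt_of_le hp ?_⟩
    have hPT : prodTimes q ≤ (N:ℝ)^n := by
      unfold prodTimes
      calc ∏ i, (if q i = 0 then 1 else |(q i : ℝ)|) ≤ ∏ _i : Fin n, (N:ℝ) := by
            apply Finset.prod_le_prod
            · intro i _; positivity
            · intro i _
              by_cases h : q i = 0
              · have h1N : (1:ℕ) ≤ N := by omega
                simp only [h, if_true]
                exact_mod_cast h1N
              · simp only [h, if_false]
                calc |(q i : ℝ)| = ((|q i| : ℤ) : ℝ) := by push_cast; ring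
                _ ≤ ((N:ℤ):ℝ) := by exact_mod_cast hqb i
                _ = (N:ℝ) := by norm_num
      _ = (N:ℝ)^n := by rw [Finset.prod_const, Finset.card_univ, Fintype.card_fin]
    rcases le_or_gt v 0 with hv0 | hv0
    · have hexp0 : (0:ℝ) ≤ -(v / (n:ℝ)) := by
        rw [neg_nonneg]
        exact div_nonpos_of_nonpos_of_nonneg hv0 (by positivity)
      have h1 : (1:ℝ) ≤ prodTimes q ^ (-(v / (n:ℝ))) :=
        Real.one_le_rpow (one_le_prodTimes q) hexp0
      have h2 : (1:ℝ)/(N:ℝ)^n ≤ 1 := by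
        rw [div_le_one (by positivity)]
        have h1N : (1:ℝ) ≤ N := by
          have : (1:ℕ) ≤ N := by omega
          exact_mod_cast this
        exact one_le_pow₀ h1N
      linarith
    · have hn0 : (0:ℝ) < n := by exact_mod_cast hn
      have hexp : -(v / (n:ℝ)) ≤ 0 := neg_nonpos.2 (by positivity)
      have h1 : ((N:ℝ)^n) ^ (-(v / (n:ℝ))) ≤ prodTimes q ^ (-(v / (n:ℝ))) :=
        Real.rpow_le_rpow_of_nonpos (prodTimes_pos q) hPT hexp
      have h2 : ((N:ℝ)^n) ^ (-(v / (n:ℝ))) = (N:ℝ) ^ (-v) := by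
        rw [← Real.rpow_natCast (N:ℝ) n, ← Real.rpow_mul (by positivity)]
        congr 1
        field_simp
      have h3 : (N:ℝ) ^ (-(n:ℝ)) < (N:ℝ) ^ (-v) :=
        Real.rpow_lt_rpow_of_exponent_lt (by exact_mod_cast (by omega : 1 < N)) (by linarith)
      have h4 : (N:ℝ) ^ (-(n:ℝ)) = 1/(N:ℝ)^n := by
        rw [Real.rpow_neg (by positivity), Real.rpow_natCast]
        field_simp
      calc (1:ℝ)/(N:ℝ)^n = (N:ℝ) ^ (-(n:ℝ)) := h4.symm
      _ ≤ (N:ℝ) ^ (-v) := h3.le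
      _ = ((N:ℝ)^n) ^ (-(v / (n:ℝ))) := h2.symm
      _ ≤ prodTimes q ^ (-(v / (n:ℝ))) := h1
  have hqF : q ∈ hfin.toFinset := hfin.mem_toFinset.2 hqSv
  have := hbound q hqF hq0 p
  have hchain : |(∑ i, (q i : ℝ) * y i) + (p : ℝ)| < ε :=
    lt_of_lt_of_le hp (le_trans hNn hNM.le)
  linarith
/-- the gamma condition -/
def GP (n : ℕ) (y : Fin n → ℝ) (k : ℕ) (c : ℝ) : Prop :=
  ∀ T > (0:ℝ), ∃ t : Fin n → ℝ, (∀ i, 0 ≤ t i) ∧ T ≤ ∑ i, t i ∧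
      ∃ (p : ℤ) (q : Fin n → ℤ),
        (Finset.univ.filter fun i => q i ≠ 0).card = k ∧
        ¬(p = 0 ∧ q = 0) ∧
        Real.exp (∑ i, t i) * |(p : ℝ) + ∑ i, (q i : ℝ) * y i| ≤
          Real.exp (-c * ∑ i, t i) ∧
        ∀ i, Real.exp (-(t i)) * |(q i : ℝ)| ≤ Real.exp (-c * ∑ i, t i)

theorem exists_T {c ε : ℝ} (hc : 0 < c) (hε : 0 < ε) :
    ∃ T : ℝ, 0 < T ∧ Real.exp (-(1+c) * T) < ε := by
  refine ⟨max 1 ((-Real.log ε)/(1+c) + 1), lt_of_lt_of_le one_pos (le_max_left _ _), ?_⟩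
  have h1 : (-Real.log ε)/(1+c) + 1 ≤ max 1 ((-Real.log ε)/(1+c) + 1) := le_max_right _ _
  have hc1 : (0:ℝ) < 1 + c := by linarith
  have h2 : -(1+c) * max 1 ((-Real.log ε)/(1+c) + 1) ≤ -(1+c) * ((-Real.log ε)/(1+c) + 1) := by
    apply mul_le_mul_of_nonpos_left h1 (by linarith)
  have h3 : -(1+c) * ((-Real.log ε)/(1+c) + 1) = Real.log ε - (1+c) := by
    field_simp
    ring
  have h4 : -(1+c) * max 1 ((-Real.log ε)/(1+c) + 1) < Real.log ε := by
    rw [h3] at h2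
    linarith
  calc Real.exp (-(1+c) * max 1 ((-Real.log ε)/(1+c) + 1)) < Real.exp (Real.log ε) :=
        Real.exp_lt_exp.2 h4
  _ = ε := Real.exp_log hε

/-- Bounds extracted from a witness in the GP condition. -/
theorem witness_bounds {n : ℕ} (y : Fin n → ℝ) {k : ℕ} {c : ℝ}
    {t : Fin n → ℝ} (ht0 : ∀ i, 0 ≤ t i)
    {p : ℤ} {q : Fin n → ℤ}
    (hcard : (Finset.univ.filter fun i => q i ≠ 0).card = k)
    (hmain : Real.exp (∑ i, t i) * |(p : ℝ) + ∑ i, (q i : ℝ) * y i| ≤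
          Real.exp (-c * ∑ i, t i))
    (hcoord : ∀ i, Real.exp (-(t i)) * |(q i : ℝ)| ≤ Real.exp (-c * ∑ i, t i)) :
    |(∑ i, (q i : ℝ) * y i) + (p:ℝ)| ≤ Real.exp (-(1+c) * ∑ i, t i) ∧
      prodTimes q ≤ Real.exp ((1 - k * c) * ∑ i, t i) := by
  set τ := ∑ i, t i with hτ
  constructor
  · have h1 : |(∑ i, (q i : ℝ) * y i) + (p:ℝ)| = |(p : ℝ) + ∑ i, (q i : ℝ) * y i| := by
      rw [add_comm]
    rw [h1]
    have h2 : Real.exp (-(1+c) * τ) = Real.exp (-c * τ) / Real.exp τ := by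
      rw [← Real.exp_sub]
      congr 1
      ring
    rw [h2, le_div_iff₀ (Real.exp_pos _)]
    calc |(p : ℝ) + ∑ i, (q i : ℝ) * y i| * Real.exp τ
        = Real.exp τ * |(p : ℝ) + ∑ i, (q i : ℝ) * y i| := by ring
    _ ≤ Real.exp (-c * τ) := hmain
  · have hsub : Finset.univ.filter (fun i => q i ≠ 0) ⊆ Finset.univ := Finset.filter_subset _ _
    have hsum_le : ∑ i ∈ Finset.univ.filter (fun i => q i ≠ 0), t i ≤ τ := by
      apply Finset.sum_le_sum_of_subset_of_nonneg hsub
      intro i _ _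
      exact ht0 i
    calc prodTimes q = ∏ i ∈ Finset.univ.filter (fun i => q i ≠ 0), |(q i : ℝ)| :=
          prodTimes_eq_filter q
    _ ≤ ∏ i ∈ Finset.univ.filter (fun i => q i ≠ 0), Real.exp (t i - c * τ) := by
        apply Finset.prod_le_prod
        · intro i _; positivity
        · intro i _
          have := hcoord i
          have h3 : Real.exp (t i - c * τ) = Real.exp (t i) * Real.exp (-c * τ) := by
            rw [← Real.exp_add]; congr 1; ring
          rw [h3]
          have h4 : |(q i : ℝ)| = Real.exp (t i) * (Real.exp (-(t i)) * |(q i : ℝ)|) := by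
            rw [← mul_assoc, ← Real.exp_add]
            simp
          rw [h4]
          exact mul_le_mul_of_nonneg_left this (Real.exp_pos _).le
    _ = Real.exp (∑ i ∈ Finset.univ.filter (fun i => q i ≠ 0), (t i - c * τ)) :=
        (Real.exp_sum _ _).symm
    _ = Real.exp ((∑ i ∈ Finset.univ.filter (fun i => q i ≠ 0), t i) - k * (c * τ)) := by
        congr 1
        rw [Finset.sum_sub_distrib, Finset.sum_const, hcard]
        ring
    _ ≤ Real.exp ((1 - k * c) * τ) := by
        apply Real.exp_le_exp.2
        nlinarith [hsum_le]

theorem q_ne_zero_of_card {n : ℕ} {q : Fin n → ℤ} {k : ℕ} (hk : 1 ≤ k)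
    (hcard : (Finset.univ.filter fun i => q i ≠ 0).card = k) : q ≠ 0 := by
  intro hq0
  subst hq0
  simp at hcard
  omega
theorem mem_G_consequence {n : ℕ} (hn : 1 ≤ n) (y : Fin n → ℝ)
    (noexact : ∀ q : Fin n → ℤ, q ≠ 0 → ∀ p : ℤ, (∑ i, (q i : ℝ) * y i) + (p : ℝ) ≠ 0)
    {k : ℕ} (hk : 1 ≤ k) {c : ℝ} (hc0 : 0 < c) (hG : GP n y k c)
    (hck : (k:ℝ) * c < 1) {v : ℝ} (hv : v < (n:ℝ) * (1+c) / (1 - k*c)) :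
    (Sv n y v).Infinite := by
  classical
  by_contra hfin
  rw [Set.not_infinite] at hfin
  obtain ⟨ε, hε, hbound⟩ := exists_eps y noexact hfin.toFinset
  obtain ⟨T, hT0, hTε⟩ := exists_T hc0 hε
  obtain ⟨t, ht0, htT, p, q, hcard, hnz, hmain, hcoord⟩ := hG T hT0
  set τ := ∑ i, t i with hτ
  have hτ0 : 0 < τ := lt_of_lt_of_le hT0 htT
  obtain ⟨hδ, hPT⟩ := witness_bounds y ht0 hcard hmain hcoord
  have hq0 : q ≠ 0 := q_ne_zero_of_card hk hcard
  have hn0 : (0:ℝ) < n := by exact_mod_cast hn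
  have hkc : (0:ℝ) < 1 - k*c := by linarith
  -- q ∈ Sv v
  have hqSv : q ∈ Sv n y v := by
    refine ⟨p, ?_⟩
    rcases le_or_gt v 0 with hv0 | hv0
    · have h1 : (1:ℝ) ≤ prodTimes q ^ (-(v / (n:ℝ))) :=
        Real.one_le_rpow (one_le_prodTimes q)
          (neg_nonneg.2 (div_nonpos_of_nonpos_of_nonneg hv0 hn0.le))
      calc |(∑ i, (q i : ℝ) * y i) + (p:ℝ)| ≤ Real.exp (-(1+c) * τ) := hδ
      _ < 1 := by
          rw [Real.exp_lt_one_iff]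
          nlinarith
      _ ≤ prodTimes q ^ (-(v / (n:ℝ))) := h1
    · have hexp : -(v / (n:ℝ)) ≤ 0 := neg_nonpos.2 (by positivity)
      have h1 : Real.exp ((1 - k*c) * τ) ^ (-(v / (n:ℝ))) ≤ prodTimes q ^ (-(v / (n:ℝ))) :=
        Real.rpow_le_rpow_of_nonpos (prodTimes_pos q) hPT hexp
      have h2 : Real.exp ((1 - k*c) * τ) ^ (-(v / (n:ℝ)))
          = Real.exp (((1 - k*c) * τ) * (-(v / (n:ℝ)))) := (Real.exp_mul _ _).symm
      have h3 : Real.exp (-(1+c) * τ) < Real.exp (((1 - k*c) * τ) * (-(v / (n:ℝ)))) := by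
        rw [Real.exp_lt_exp]
        have hkey : (1 - k*c) * (v / n) < 1 + c := by
          rw [lt_div_iff₀ hkc] at hv
          rw [← sub_pos]
          have e1 : v * (1 - k*c) < n * (1+c) := hv
          calc (0:ℝ) < (n * (1+c) - v * (1-k*c)) / n := div_pos (by nlinarith) hn0
          _ = 1 + c - (1 - k*c) * (v/n) := by field_simp
        nlinarith
      calc |(∑ i, (q i : ℝ) * y i) + (p:ℝ)| ≤ Real.exp (-(1+c) * τ) := hδ
      _ < Real.exp (((1 - k*c) * τ) * (-(v / (n:ℝ)))) := h3
      _ = Real.exp ((1 - k*c) * τ) ^ (-(v / (n:ℝ))) := h2.symm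
      _ ≤ prodTimes q ^ (-(v / (n:ℝ))) := h1
  have hqF : q ∈ hfin.toFinset := hfin.mem_toFinset.2 hqSv
  have hb := hbound q hqF hq0 p
  have hchain : |(∑ i, (q i : ℝ) * y i) + (p:ℝ)| < ε := by
    calc |(∑ i, (q i : ℝ) * y i) + (p:ℝ)| ≤ Real.exp (-(1+c) * τ) := hδ
    _ ≤ Real.exp (-(1+c) * T) := by
        apply Real.exp_le_exp.2
        nlinarith
    _ < ε := hTε
  linarith

theorem exact_of_G_ge {n : ℕ} (hn : 1 ≤ n) (y : Fin n → ℝ)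
    {k : ℕ} (hk : 1 ≤ k) {c : ℝ} (hc0 : 0 < c) (hG : GP n y k c)
    (hck : (1:ℝ) ≤ (k:ℝ) * c) :
    ∃ q₀ : Fin n → ℤ, q₀ ≠ 0 ∧ ∃ p₀ : ℤ, (∑ i, (q₀ i : ℝ) * y i) + (p₀ : ℝ) = 0 := by
  classical
  by_contra hne
  push_neg at hne
  have noexact : ∀ q : Fin n → ℤ, q ≠ 0 → ∀ p : ℤ, (∑ i, (q i : ℝ) * y i) + (p : ℝ) ≠ 0 :=
    hne
  set F : Finset (Fin n → ℤ) := Fintype.piFinset (fun _ => Finset.Icc (-1 : ℤ) 1) with hF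
  obtain ⟨ε, hε, hbound⟩ := exists_eps y noexact F
  obtain ⟨T, hT0, hTε⟩ := exists_T hc0 hε
  obtain ⟨t, ht0, htT, p, q, hcard, hnz, hmain, hcoord⟩ := hG T hT0
  set τ := ∑ i, t i with hτ
  have hτ0 : 0 < τ := lt_of_lt_of_le hT0 htT
  obtain ⟨hδ, hPT⟩ := witness_bounds y ht0 hcard hmain hcoord
  have hq0 : q ≠ 0 := q_ne_zero_of_card hk hcard
  have hPT1 : prodTimes q ≤ 1 := by
    calc prodTimes q ≤ Real.exp ((1 - k * c) * τ) := hPT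
    _ ≤ Real.exp 0 := Real.exp_le_exp.2 (by nlinarith)
    _ = 1 := Real.exp_zero
  have hqF : q ∈ F := by
    rw [hF, Fintype.mem_piFinset]
    intro i
    rw [Finset.mem_Icc]
    by_cases h : q i = 0
    · rw [h]; constructor <;> norm_num
    · have h1 : |(q i : ℝ)| ≤ 1 := le_trans (abs_le_prodTimes q h) hPT1
      have h2 : |q i| ≤ (1:ℤ) := by exact_mod_cast (by push_cast at h1 ⊢; exact_mod_cast h1 : ((|q i| : ℤ):ℝ) ≤ 1)
      rw [abs_le] at h2
      exact h2
  have hb := hbound q hqF hq0 p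
  have hchain : |(∑ i, (q i : ℝ) * y i) + (p:ℝ)| < ε := by
    calc |(∑ i, (q i : ℝ) * y i) + (p:ℝ)| ≤ Real.exp (-(1+c) * τ) := hδ
    _ ≤ Real.exp (-(1+c) * T) := by
        apply Real.exp_le_exp.2
        nlinarith
    _ < ε := hTε
  linarith
theorem card_le_n {n : ℕ} (q : Fin n → ℤ) :
    (Finset.univ.filter fun i => q i ≠ 0).card ≤ n := by
  calc (Finset.univ.filter fun i => q i ≠ 0).card ≤ Finset.univ.card :=
        Finset.card_filter_le _ _
  _ = n := by rw [Finset.card_univ, Fintype.card_fin]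

theorem exists_k {n : ℕ} (y : Fin n → ℝ) {v : ℝ} (hinf : (Sv n y v).Infinite) :
    ∃ k, 1 ≤ k ∧ k ≤ n ∧
      {q ∈ Sv n y v | (Finset.univ.filter fun i => q i ≠ 0).card = k}.Infinite := by
  classical
  by_contra hc
  push_neg at hc
  apply hinf
  have hfin : ∀ k ∈ Finset.Icc 1 n,
      {q ∈ Sv n y v | (Finset.univ.filter fun i => q i ≠ 0).card = k}.Finite := by
    intro k hk
    rw [Finset.mem_Icc] at hk
    rw [← Set.not_infinite]
    exact Set.not_infinite.mpr (hc k hk.1 hk.2)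
  have hsub : Sv n y v ⊆ {0} ∪ ⋃ k ∈ Finset.Icc 1 n,
      {q ∈ Sv n y v | (Finset.univ.filter fun i => q i ≠ 0).card = k} := by
    intro q hq
    set k := (Finset.univ.filter fun i => q i ≠ 0).card with hk
    rcases Nat.eq_zero_or_pos k with hk0 | hk1
    · left
      have : ∀ i, q i = 0 := by
        intro i
        by_contra hqi
        have hmem : i ∈ Finset.univ.filter fun i => q i ≠ 0 := by simp [hqi]
        rw [Finset.card_eq_zero] at hk0
        rw [hk0] at hmem
        exact absurd hmem (Finset.notMem_empty i)
      exact funext this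
    · right
      refine Set.mem_biUnion (show k ∈ (Finset.Icc 1 n : Finset ℕ) from ?_) ⟨hq, rfl⟩
      rw [Finset.mem_Icc]
      exact ⟨hk1, card_le_n q⟩
  apply Set.Finite.subset _ hsub
  apply Set.Finite.union (Set.finite_singleton 0)
  apply Set.Finite.biUnion (Finset.Icc 1 n).finite_toSet
  intro k hk
  exact hfin k hk

theorem mem_G_of_Sv {n : ℕ} (hn : 1 ≤ n) (y : Fin n → ℝ) {v : ℝ} (hvn : (n:ℝ) < v)
    {k : ℕ} (hk1 : 1 ≤ k)
    (hinf : {q ∈ Sv n y v | (Finset.univ.filter fun i => q i ≠ 0).card = k}.Infinite)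
    {c : ℝ} (hc0 : 0 < c) (hcle : c ≤ (v - n) / ((k:ℝ)*v + n)) : GP n y k c := by
  classical
  have hn0 : (0:ℝ) < n := by exact_mod_cast hn
  have hk0 : (0:ℝ) < k := by exact_mod_cast hk1
  have hkvn : (0:ℝ) < (k:ℝ)*v + n := by nlinarith
  have hvpos : (0:ℝ) < v := by nlinarith
  have hcle' : c * ((k:ℝ)*v + n) ≤ v - n := by
    rw [le_div_iff₀ hkvn] at hcle
    exact hcle
  have hck : (k:ℝ) * c < 1 := by nlinarith
  have hkc : (0:ℝ) < 1 - (k:ℝ)*c := by linarith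
  intro T hT
  set B : ℝ := Real.exp ((1 - (k:ℝ)*c) * T) with hB
  have hB1 : (1:ℝ) ≤ B := by
    have h0 : (0:ℝ) ≤ (1 - (k:ℝ)*c) * T := by nlinarith
    calc (1:ℝ) = Real.exp 0 := Real.exp_zero.symm
    _ ≤ B := Real.exp_le_exp.2 h0
  have hqex : ∃ q ∈ {q ∈ Sv n y v | (Finset.univ.filter fun i => q i ≠ 0).card = k},
      B ≤ prodTimes q := by
    by_contra hno
    push_neg at hno
    apply hinf
    apply Set.Finite.subset
      ((Fintype.piFinset (fun _ : Fin n => Finset.Icc (-(⌈B⌉) : ℤ) ⌈B⌉)).finite_toSet)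
    intro q hq
    have hqB := hno q hq
    have hceil : (1:ℤ) ≤ ⌈B⌉ := by
      have := Int.le_ceil B
      exact_mod_cast Int.one_le_ceil_iff.2 (by linarith)
    rw [Finset.mem_coe, Fintype.mem_piFinset]
    intro i
    rw [Finset.mem_Icc]
    by_cases h : q i = 0
    · rw [h]; omega
    · have h1 : |(q i : ℝ)| ≤ (⌈B⌉ : ℝ) :=
        le_trans (le_trans (abs_le_prodTimes q h) hqB.le) (Int.le_ceil B)
      have h2 : |q i| ≤ ⌈B⌉ := by
        have : ((|q i| : ℤ) : ℝ) ≤ ((⌈B⌉ : ℤ) : ℝ) := by push_cast at h1 ⊢; exact_mod_cast h1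
        exact_mod_cast this
      rw [abs_le] at h2
      exact h2
  obtain ⟨q, ⟨hqSv, hqcard⟩, hqB⟩ := hqex
  obtain ⟨p, hp⟩ := hqSv
  have hq0 : q ≠ 0 := q_ne_zero_of_card hk1 hqcard
  set L : ℝ := Real.log (prodTimes q) with hL
  have hL0 : 0 ≤ L := Real.log_nonneg (one_le_prodTimes q)
  have hLB : (1 - (k:ℝ)*c) * T ≤ L := by
    calc (1 - (k:ℝ)*c) * T = Real.log B := by rw [hB, Real.log_exp]
    _ ≤ L := Real.log_le_log (by positivity) hqB
  set τ : ℝ := L / (1 - (k:ℝ)*c) with hτ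
  have hτT : T ≤ τ := by
    rw [hτ, le_div_iff₀ hkc]
    linarith [hLB]
  have hτ0 : 0 < τ := lt_of_lt_of_le hT hτT
  have hLτ : L = (1 - (k:ℝ)*c) * τ := by
    rw [hτ]
    field_simp
  set t : Fin n → ℝ := fun i => if q i ≠ 0 then Real.log |(q i : ℝ)| + c * τ else 0 with ht
  have ht0 : ∀ i, 0 ≤ t i := by
    intro i
    rw [ht]
    by_cases h : q i = 0
    · simp [h]
    · simp only [h, ne_eq, not_false_eq_true, if_true]
      have := Real.log_nonneg (one_le_abs_cast h)
      positivity
  have hsum : ∑ i, t i = τ := by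
    have h1 : ∑ i, t i = ∑ i ∈ Finset.univ.filter (fun i => q i ≠ 0),
        (Real.log |(q i : ℝ)| + c * τ) := by
      rw [Finset.sum_filter]
    have h2 : ∑ i ∈ Finset.univ.filter (fun i => q i ≠ 0),
        (Real.log |(q i : ℝ)| + c * τ)
        = (∑ i ∈ Finset.univ.filter (fun i => q i ≠ 0), Real.log |(q i : ℝ)|)
          + (k:ℝ) * (c * τ) := by
      rw [Finset.sum_add_distrib, Finset.sum_const, hqcard]
      push_cast
      ring
    have h3 : ∑ i ∈ Finset.univ.filter (fun i => q i ≠ 0), Real.log |(q i : ℝ)| = L := by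
      rw [hL, prodTimes_eq_filter]
      rw [Real.log_prod]
      intro i hi
      rw [Finset.mem_filter] at hi
      exact abs_ne_zero.2 (Int.cast_ne_zero.2 hi.2)
    rw [h1, h2, h3, hLτ]
    ring
  refine ⟨t, ht0, by rw [hsum]; exact hτT, p, q, hqcard, ?_, ?_, ?_⟩
  · intro hz
    exact hq0 hz.2
  · rw [hsum]
    have habs : |(p:ℝ) + ∑ i, (q i : ℝ) * y i| = |(∑ i, (q i : ℝ) * y i) + (p:ℝ)| := by
      rw [add_comm]
    have hδle : |(∑ i, (q i : ℝ) * y i) + (p:ℝ)| ≤ Real.exp (-(1+c) * τ) := by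
      have hmono : prodTimes q ^ (-(v / (n:ℝ))) ≤ prodTimes q ^ (-((1+c)/(1 - (k:ℝ)*c))) := by
        apply Real.rpow_le_rpow_of_exponent_le (one_le_prodTimes q)
        have hkey : (1+c)/(1 - (k:ℝ)*c) ≤ v / (n:ℝ) := by
          rw [div_le_div_iff₀ hkc hn0]
          nlinarith
        linarith
      have heq : prodTimes q ^ (-((1+c)/(1 - (k:ℝ)*c))) = Real.exp (-(1+c) * τ) := by
        rw [Real.rpow_def_of_pos (prodTimes_pos q), ← hL]
        congr 1
        rw [hLτ]
        field_simp
      calc |(∑ i, (q i : ℝ) * y i) + (p:ℝ)| ≤ prodTimes q ^ (-(v / (n:ℝ))) := hp.le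
      _ ≤ prodTimes q ^ (-((1+c)/(1 - (k:ℝ)*c))) := hmono
      _ = Real.exp (-(1+c) * τ) := heq
    rw [habs]
    calc Real.exp τ * |(∑ i, (q i : ℝ) * y i) + (p:ℝ)|
        ≤ Real.exp τ * Real.exp (-(1+c) * τ) :=
          mul_le_mul_of_nonneg_left hδle (Real.exp_pos _).le
    _ = Real.exp (-c * τ) := by
        rw [← Real.exp_add]
        congr 1
        ring
  · intro i
    rw [hsum, ht]
    by_cases h : q i = 0
    · simp [h]
      positivity
    · simp only [h, ne_eq, not_false_eq_true, if_true]
      have heq : Real.exp (-(Real.log |(q i : ℝ)| + c * τ)) * |(q i : ℝ)|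
          = Real.exp (-(c * τ)) := by
        rw [neg_add, Real.exp_add, Real.exp_neg, Real.exp_log
          (abs_pos.2 (Int.cast_ne_zero.2 h))]
        field_simp
      rw [heq]
      apply le_of_eq
      congr 1
      ring

theorem one_le_card_filter {n : ℕ} {q : Fin n → ℤ} (hq : q ≠ 0) :
    1 ≤ (Finset.univ.filter fun i => q i ≠ 0).card := by
  rw [Nat.one_le_iff_ne_zero]
  intro h0
  apply hq
  funext i
  simp only [Pi.zero_apply]
  by_contra hqi
  have hmem : i ∈ Finset.univ.filter fun i => q i ≠ 0 := by simp [hqi]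
  rw [Finset.card_eq_zero.1 h0] at hmem
  exact absurd hmem (Finset.notMem_empty i)

theorem GP_of_exact {n : ℕ} (y : Fin n → ℝ) {q₀ : Fin n → ℤ} (hq0 : q₀ ≠ 0)
    {p₀ : ℤ} (hx : (∑ i, (q₀ i : ℝ) * y i) + (p₀ : ℝ) = 0)
    {c : ℝ} (hc0 : 0 < c)
    (hck : (((Finset.univ.filter fun i => q₀ i ≠ 0).card : ℝ)) * c < 1) :
    GP n y (Finset.univ.filter fun i => q₀ i ≠ 0).card c := by
  classical
  set k := (Finset.univ.filter fun i => q₀ i ≠ 0).card with hk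
  have hk1 : 1 ≤ k := one_le_card_filter hq0
  have hk0 : (0:ℝ) < k := by exact_mod_cast hk1
  have hkc : (0:ℝ) < 1 - (k:ℝ)*c := by nlinarith
  intro T hT
  set L : ℝ := Real.log (prodTimes q₀) with hL
  have hL0 : 0 ≤ L := Real.log_nonneg (one_le_prodTimes q₀)
  set s : ℝ := max T (L / (1 - (k:ℝ)*c)) with hs
  have hsT : T ≤ s := le_max_left _ _
  have hs0 : 0 < s := lt_of_lt_of_le hT hsT
  have hsL : L ≤ (1 - (k:ℝ)*c) * s := by
    have h1 : L / (1 - (k:ℝ)*c) ≤ s := le_max_right _ _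
    rw [div_le_iff₀ hkc] at h1
    linarith
  set t : Fin n → ℝ := fun i => if q₀ i ≠ 0 then s else 0 with ht
  have ht0 : ∀ i, 0 ≤ t i := by
    intro i
    rw [ht]
    by_cases h : q₀ i = 0 <;> simp [h] <;> positivity
  have hsum : ∑ i, t i = (k:ℝ) * s := by
    have h1 : ∑ i, t i = ∑ _i ∈ Finset.univ.filter (fun i => q₀ i ≠ 0), s := by
      rw [Finset.sum_filter]
    rw [h1, Finset.sum_const, ← hk, nsmul_eq_mul]
  refine ⟨t, ht0, ?_, p₀, q₀, rfl, fun hz => hq0 hz.2, ?_, ?_⟩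
  · rw [hsum]
    calc T ≤ s := hsT
    _ ≤ (k:ℝ) * s := le_mul_of_one_le_left hs0.le (by exact_mod_cast hk1)
  · have hzero : (p₀:ℝ) + ∑ i, (q₀ i : ℝ) * y i = 0 := by
      rw [add_comm]
      exact hx
    rw [hzero, abs_zero, mul_zero]
    positivity
  · intro i
    rw [hsum, ht]
    by_cases h : q₀ i = 0
    · simp [h]
      positivity
    · simp only [h, ne_eq, not_false_eq_true, if_true]
      have h1 : |(q₀ i : ℝ)| ≤ Real.exp ((1 - (k:ℝ)*c) * s) := by
        calc |(q₀ i : ℝ)| ≤ prodTimes q₀ := abs_le_prodTimes q₀ h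
        _ = Real.exp L := (Real.exp_log (prodTimes_pos q₀)).symm
        _ ≤ Real.exp ((1 - (k:ℝ)*c) * s) := Real.exp_le_exp.2 hsL
      calc Real.exp (-s) * |(q₀ i : ℝ)|
          ≤ Real.exp (-s) * Real.exp ((1 - (k:ℝ)*c) * s) :=
            mul_le_mul_of_nonneg_left h1 (Real.exp_pos _).le
      _ = Real.exp (-c * ((k:ℝ) * s)) := by
          rw [← Real.exp_add]
          congr 1
          ring
theorem ereal_le_of_forall_real_lt {x A : EReal}
    (h : ∀ v : ℝ, (v : EReal) < x → (v : EReal) ≤ A) : x ≤ A := by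
  by_contra hc
  push_neg at hc
  obtain ⟨v, hv1, hv2⟩ := EReal.exists_between_coe_real hc
  exact absurd (h v hv2) (not_le.2 hv1)

end Stmt9Aux

/-- Multiplicative Diophantine exponent ω×(y): the sup (in the extended reals) of all
v ∈ ℝ such that there are infinitely many q ∈ ℤⁿ with |q·y + p| < Π×(q)^{-v/n}
for some p ∈ ℤ. -/
noncomputable def omegaT {n : ℕ} (y : Fin n → ℝ) : EReal :=
  sSup {w : EReal | ∃ v : ℝ, w = (v : EReal) ∧
    {q : Fin n → ℤ | ∃ p : ℤ, |(∑ i, (q i : ℝ) * y i) + (p : ℝ)| <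
      (prodTimes q) ^ (-(v / (n : ℝ)))}.Infinite}

/-- γ_k(y): the supremum (in [0, ∞], here realized inside EReal with 0 inserted so
that sup ∅ = 0) of all c > 0 such that for arbitrarily large ∑ tᵢ the lattice
g_t u_y (ℤ^{n+1}_k) contains a nonzero vector of sup norm ≤ e^{-c ∑ tᵢ}. -/
noncomputable def gammaK {n : ℕ} (y : Fin n → ℝ) (k : ℕ) : EReal :=
  sSup (insert (0 : EReal) {w : EReal | ∃ c : ℝ, w = (c : EReal) ∧ 0 < c ∧
    ∀ T > (0:ℝ), ∃ t : Fin n → ℝ, (∀ i, 0 ≤ t i) ∧ T ≤ ∑ i, t i ∧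
      ∃ (p : ℤ) (q : Fin n → ℤ),
        (Finset.univ.filter fun i => q i ≠ 0).card = k ∧
        ¬(p = 0 ∧ q = 0) ∧
        Real.exp (∑ i, t i) * |(p : ℝ) + ∑ i, (q i : ℝ) * y i| ≤
          Real.exp (-c * ∑ i, t i) ∧
        ∀ i, Real.exp (-(t i)) * |(q i : ℝ)| ≤ Real.exp (-c * ∑ i, t i)})

namespace Stmt9Aux

theorem le_omega {n : ℕ} (y : Fin n → ℝ) {v : ℝ} (h : (Sv n y v).Infinite) :
    (v : EReal) ≤ omegaT y :=
  le_sSup ⟨v, rfl, h⟩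

theorem le_gamma {n : ℕ} (y : Fin n → ℝ) {k : ℕ} {c : ℝ} (hc : 0 < c)
    (hG : GP n y k c) : (c : EReal) ≤ gammaK y k :=
  le_sSup (Set.mem_insert_iff.2 (Or.inr ⟨c, rfl, hc, hG⟩))

theorem gamma_nonneg {n : ℕ} (y : Fin n → ℝ) (k : ℕ) : (0 : EReal) ≤ gammaK y k :=
  le_sSup (Set.mem_insert _ _)

theorem gamma_coe {n : ℕ} (y : Fin n → ℝ) {k : ℕ} {r : ℝ}
    (hlt : gammaK y k < (r : EReal)) :
    gammaK y k = (((gammaK y k).toReal : ℝ) : EReal) := by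
  refine (EReal.coe_toReal (ne_top_of_lt hlt) ?_).symm
  intro hbot
  have := gamma_nonneg y k
  rw [hbot] at this
  exact absurd this (by simp)

end Stmt9Aux
open Stmt9Aux in
theorem stmt9 (n : ℕ) (hn : 1 ≤ n) (y : Fin n → ℝ) :
    omegaT y = (Finset.Icc 1 n).sup' (Finset.nonempty_Icc.mpr hn) (fun k =>
      if gammaK y k < (((1 : ℝ) / (k : ℝ) : ℝ) : EReal) then
        (((n + n * (gammaK y k).toReal) / (1 - k * (gammaK y k).toReal) : ℝ) : EReal)
      else ⊤) := by
  classical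
  have hn0 : (0:ℝ) < n := by exact_mod_cast hn
  apply le_antisymm
  · -- omegaT ≤ sup'
    apply sSup_le
    rintro w ⟨v, rfl, hvinf⟩
    have hvinf' : (Sv n y v).Infinite := hvinf
    by_cases hex : ∃ q₀ : Fin n → ℤ, q₀ ≠ 0 ∧ ∃ p₀ : ℤ,
        (∑ i, (q₀ i : ℝ) * y i) + (p₀ : ℝ) = 0
    · obtain ⟨q₀, hq0, p₀, hx⟩ := hex
      set j := (Finset.univ.filter fun i => q₀ i ≠ 0).card with hj
      have hj1 : 1 ≤ j := one_le_card_filter hq0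
      have hj0 : (0:ℝ) < j := by exact_mod_cast hj1
      have hjmem : j ∈ Finset.Icc 1 n := Finset.mem_Icc.2 ⟨hj1, card_le_n q₀⟩
      have hγj : ((((1:ℝ)/(j:ℝ)) : ℝ) : EReal) ≤ gammaK y j := by
        apply ereal_le_of_forall_real_lt
        intro c hc
        rw [EReal.coe_lt_coe_iff] at hc
        rcases le_or_gt c 0 with hc0 | hc0
        · calc (c : EReal) ≤ ((0:ℝ) : EReal) := EReal.coe_le_coe_iff.2 hc0
          _ = (0 : EReal) := by norm_num
          _ ≤ gammaK y j := gamma_nonneg y j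
        · have hcj : (j:ℝ) * c < 1 := by
            rw [lt_div_iff₀ hj0] at hc
            linarith
          exact le_gamma y hc0 (GP_of_exact y hq0 hx hc0 hcj)
      refine le_trans le_top (le_trans (le_of_eq ?_) (Finset.le_sup'
        (f := fun k => if gammaK y k < (((1 : ℝ) / (k : ℝ) : ℝ) : EReal) then
          (((n + n * (gammaK y k).toReal) / (1 - k * (gammaK y k).toReal) : ℝ) : EReal)
        else ⊤) hjmem))
      rw [if_neg (not_lt.2 hγj)]
    · push_neg at hex
      have noexact : ∀ q : Fin n → ℤ, q ≠ 0 → ∀ p : ℤ,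
          (∑ i, (q i : ℝ) * y i) + (p : ℝ) ≠ 0 := hex
      rcases le_or_gt v (n:ℝ) with hvn | hvn
      · have h1mem : (1:ℕ) ∈ Finset.Icc 1 n := Finset.mem_Icc.2 ⟨le_refl 1, hn⟩
        refine le_trans ?_ (Finset.le_sup' _ h1mem)
        by_cases hlt : gammaK y 1 < (((1 : ℝ) / ((1:ℕ) : ℝ) : ℝ) : EReal)
        · rw [if_pos hlt]
          set g := (gammaK y 1).toReal with hg
          have hγeq := gamma_coe y hlt
          have hg0 : 0 ≤ g := by
            have h0 := gamma_nonneg y 1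
            rw [hγeq] at h0
            exact_mod_cast h0
          have hg1 : g < 1 := by
            rw [hγeq] at hlt
            have := EReal.coe_lt_coe_iff.1 hlt
            norm_num at this
            linarith
          rw [EReal.coe_le_coe_iff]
          have hden : (0:ℝ) < 1 - (1:ℕ) * g := by push_cast; linarith
          rw [le_div_iff₀ hden]
          push_cast
          nlinarith
        · rw [if_neg hlt]
          exact le_top
      · obtain ⟨k, hk1, hkn, hkinf⟩ := exists_k y hvinf'
        have hk0 : (0:ℝ) < k := by exact_mod_cast hk1
        have hkvn : (0:ℝ) < (k:ℝ)*v + n := by nlinarith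
        have hkmem : k ∈ Finset.Icc 1 n := Finset.mem_Icc.2 ⟨hk1, hkn⟩
        set cstar := (v - n)/((k:ℝ)*v + n) with hcstar
        have hcs0 : 0 < cstar := div_pos (by linarith) hkvn
        have hGstar : GP n y k cstar := mem_G_of_Sv hn y hvn hk1 hkinf hcs0 (le_refl _)
        have hγk : ((cstar : ℝ) : EReal) ≤ gammaK y k := le_gamma y hcs0 hGstar
        refine le_trans ?_ (Finset.le_sup' _ hkmem)
        by_cases hlt : gammaK y k < (((1 : ℝ) / ((k:ℕ) : ℝ) : ℝ) : EReal)
        · rw [if_pos hlt]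
          set g := (gammaK y k).toReal with hg
          have hγeq := gamma_coe y hlt
          have hg0 : 0 ≤ g := by
            have h0 := gamma_nonneg y k
            rw [hγeq] at h0
            exact_mod_cast h0
          have hgk : g < 1/(k:ℝ) := by
            rw [hγeq] at hlt
            exact EReal.coe_lt_coe_iff.1 hlt
          have hkg1 : (k:ℝ) * g < 1 := by
            rw [lt_div_iff₀ hk0] at hgk
            linarith
          have hcsg : cstar ≤ g := by
            rw [hγeq] at hγk
            exact EReal.coe_le_coe_iff.1 hγk
          rw [EReal.coe_le_coe_iff]
          have hden : (0:ℝ) < 1 - (k:ℝ) * g := by linarith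
          rw [le_div_iff₀ hden]
          have hcseq : cstar * ((k:ℝ)*v + n) = v - n := div_mul_cancel₀ _ hkvn.ne'
          nlinarith
        · rw [if_neg hlt]
          exact le_top
  · -- sup' ≤ omegaT
    apply Finset.sup'_le
    intro k hkmem
    rw [Finset.mem_Icc] at hkmem
    obtain ⟨hk1, hkn⟩ := hkmem
    have hk0 : (0:ℝ) < k := by exact_mod_cast hk1
    by_cases hex : ∃ q₀ : Fin n → ℤ, q₀ ≠ 0 ∧ ∃ p₀ : ℤ,
        (∑ i, (q₀ i : ℝ) * y i) + (p₀ : ℝ) = 0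
    · obtain ⟨q₀, hq0, p₀, hx⟩ := hex
      have htop : (⊤ : EReal) ≤ omegaT y := by
        apply ereal_le_of_forall_real_lt
        intro v _
        exact le_omega y (Sv_infinite_of_exact y hq0 hx v)
      exact le_trans le_top htop
    · push_neg at hex
      have noexact : ∀ q : Fin n → ℤ, q ≠ 0 → ∀ p : ℤ,
          (∑ i, (q i : ℝ) * y i) + (p : ℝ) ≠ 0 := hex
      by_cases hlt : gammaK y k < (((1 : ℝ) / ((k:ℕ) : ℝ) : ℝ) : EReal)
      · rw [if_pos hlt]
        set g := (gammaK y k).toReal with hg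
        have hγeq := gamma_coe y hlt
        have hg0 : 0 ≤ g := by
          have h0 := gamma_nonneg y k
          rw [hγeq] at h0
          exact_mod_cast h0
        have hgk : g < 1/(k:ℝ) := by
          rw [hγeq] at hlt
          exact EReal.coe_lt_coe_iff.1 hlt
        have hkg1 : (k:ℝ) * g < 1 := by
          rw [lt_div_iff₀ hk0] at hgk
          linarith
        apply ereal_le_of_forall_real_lt
        intro v hv
        rw [EReal.coe_lt_coe_iff] at hv
        apply le_omega y
        rcases lt_or_ge v (n:ℝ) with hvn | hvn
        · exact Sv_infinite_of_lt hn y noexact hvn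
        · have hkvn : (0:ℝ) < (k:ℝ)*v + n := by nlinarith
          set cstar := (v - n)/((k:ℝ)*v + n) with hcstar
          have hcs0 : 0 ≤ cstar := div_nonneg (by linarith) hkvn.le
          have hcsg : cstar < g := by
            rw [div_lt_iff₀ hkvn]
            have hden : (0:ℝ) < 1 - (k:ℝ) * g := by linarith
            have hv' : v * (1 - (k:ℝ)*g) < (n:ℝ) + n * g := (lt_div_iff₀ hden).1 hv
            nlinarith
          have hlt2 : ((cstar : ℝ) : EReal) < gammaK y k := by
            rw [hγeq]
            exact_mod_cast EReal.coe_lt_coe_iff.2 hcsg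
          obtain ⟨w, hw, hcw⟩ := lt_sSup_iff.1 hlt2
          rcases Set.mem_insert_iff.1 hw with rfl | hw
          · exact absurd hcw (not_lt.2 (by exact_mod_cast EReal.coe_le_coe_iff.2 hcs0))
          · obtain ⟨c, rfl, hc0, hGc⟩ := hw
            have hcstarc : cstar < c := EReal.coe_lt_coe_iff.1 hcw
            have hck : (k:ℝ) * c < 1 := by
              have h1 : (c : EReal) ≤ gammaK y k := le_gamma y hc0 hGc
              have h2 : c < 1/(k:ℝ) := EReal.coe_lt_coe_iff.1 (lt_of_le_of_lt h1 hlt)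
              rw [lt_div_iff₀ hk0] at h2
              linarith
            have hvbound : v < (n:ℝ) * (1+c) / (1 - (k:ℝ)*c) := by
              rw [lt_div_iff₀ (by linarith : (0:ℝ) < 1 - (k:ℝ)*c)]
              have := (div_lt_iff₀ hkvn).1 hcstarc
              nlinarith
            exact mem_G_consequence hn y noexact hk1 hc0 hGc hck hvbound
      · rw [if_neg hlt]
        apply ereal_le_of_forall_real_lt
        intro v _
        apply le_omega y
        rcases lt_or_ge v (n:ℝ) with hvn | hvn
        · exact Sv_infinite_of_lt hn y noexact hvn
        · have hkvn : (0:ℝ) < (k:ℝ)*v + n := by nlinarith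
          set cstar := (v - n)/((k:ℝ)*v + n) with hcstar
          have hcs0 : 0 ≤ cstar := div_nonneg (by linarith) hkvn.le
          have hcsk : cstar < 1/(k:ℝ) := by
            rw [div_lt_div_iff₀ hkvn hk0]
            nlinarith
          have hlt2 : ((cstar : ℝ) : EReal) < gammaK y k :=
            lt_of_lt_of_le (EReal.coe_lt_coe_iff.2 hcsk) (not_lt.1 hlt)
          obtain ⟨w, hw, hcw⟩ := lt_sSup_iff.1 hlt2
          rcases Set.mem_insert_iff.1 hw with rfl | hw
          · exact absurd hcw (not_lt.2 (by exact_mod_cast EReal.coe_le_coe_iff.2 hcs0))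
          · obtain ⟨c, rfl, hc0, hGc⟩ := hw
            have hcstarc : cstar < c := EReal.coe_lt_coe_iff.1 hcw
            rcases lt_or_ge ((k:ℝ)*c) 1 with hck | hck
            · have hvbound : v < (n:ℝ) * (1+c) / (1 - (k:ℝ)*c) := by
                rw [lt_div_iff₀ (by linarith : (0:ℝ) < 1 - (k:ℝ)*c)]
                have := (div_lt_iff₀ hkvn).1 hcstarc
                nlinarith
              exact mem_G_consequence hn y noexact hk1 hc0 hGc hck hvbound
            · obtain ⟨q₀, hq0, p₀, hx⟩ := exact_of_G_ge hn y hk1 hc0 hGc hck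
              exact absurd hx (noexact q₀ hq0 p₀)
end
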